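/- arXiv:2206.05366 — 15 statements merged into one kernel-verified Lean document; each statement's English description precedes it below -/
import Mathlib

section
/- For every real number x with 0 < x ≤ 1/3, the series ∑_{n=1}^∞ m(n)·xⁿ converges and ∑_{n=1}^∞ m(n)·xⁿ = (1 − x − √(1 − 2x − 3x²))/(2x). -/
open Finset

lemma tri_le_sq (a : ℕ → ℝ) (ha : ∀ i, 0 ≤ a i) (K : ℕ) :
    ∑ k ∈ range K, ∑ i ∈ range (k+1), a i * a (k - i) ≤ (∑ i ∈ range K, a i)^2 := by
  have h1 : ∑ k ∈ range K, ∑ i ∈ range (k+1), a i * a (k - i)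
      = ∑ k ∈ range K, ∑ i ∈ range K, if i ≤ k then a i * a (k - i) else 0 := by
    refine sum_congr rfl fun k hk => ?_
    rw [sum_ite, sum_const_zero, add_zero]
    refine (sum_congr ?_ fun _ _ => rfl).symm
    ext i
    simp only [mem_filter, mem_range, mem_range] at *
    omega
  rw [h1, sum_comm, sq, sum_mul]
  refine sum_le_sum fun i hi => ?_
  have h2 : ∑ k ∈ range K, (if i ≤ k then a i * a (k - i) else 0)
      = ∑ k ∈ Ico i K, a i * a (k - i) := by
    rw [sum_ite, sum_const_zero, add_zero]
    refine sum_congr ?_ fun _ _ => rfl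
    ext k
    simp only [mem_filter, mem_range, mem_Ico]
    omega
  rw [h2, Finset.sum_Ico_eq_sum_range]
  simp only [add_tsub_cancel_left]
  rw [← mul_sum]
  refine mul_le_mul_of_nonneg_left ?_ (ha i)
  refine sum_le_sum_of_subset_of_nonneg ?_ fun j _ _ => ha j
  exact range_subset_range.2 (Nat.sub_le K i)

set_option maxHeartbeats 1000000 in
/-- For every real `x` with `0 < x ≤ 1/3`, the series `∑_{n≥1} m(n)·xⁿ`
(where `m` is the Motzkin tree counting sequence, with `m 0 = 0`) converges to
`(1 − x − √(1 − 2x − 3x²))/(2x)`. Since `m 0 = 0`, summing over all `n : ℕ` is the same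
as summing over `n ≥ 1`. -/
theorem motzkin_generating_function_value
    (m : ℕ → ℕ) (hm0 : m 0 = 0) (hm1 : m 1 = 1)
    (hm : ∀ n, 2 ≤ n →
      m n = m (n - 1) + ∑ i ∈ Finset.Icc 1 (n - 2), m i * m (n - 1 - i))
    (x : ℝ) (hx : 0 < x) (hx' : x ≤ 1 / 3) :
    HasSum (fun n : ℕ => (m n : ℝ) * x ^ n)
      ((1 - x - Real.sqrt (1 - 2 * x - 3 * x ^ 2)) / (2 * x)) := by
  have hx0 : x ≠ 0 := ne_of_gt hx
  set a : ℕ → ℝ := fun n => (m n : ℝ) * x ^ n with ha_def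
  have ha : ∀ i, 0 ≤ a i := fun i => by positivity
  set c : ℕ → ℝ := fun n => ∑ i ∈ range (n+1), a i * a (n - i) with hc_def
  have ha0 : a 0 = 0 := by simp [ha_def, hm0]
  have ha1 : a 1 = x := by simp [ha_def, hm1]
  -- key recursion for a
  have hkey : ∀ n : ℕ, a (n + 2) = x * a (n + 1) + x * c (n + 1) := by
    intro n
    have hc1 : c (n + 1) = ∑ i ∈ range n, a (i + 1) * a (n - i) := by
      show ∑ i ∈ range (n + 1 + 1), a i * a (n + 1 - i) = _
      rw [sum_range_succ, sum_range_succ']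
      simp [ha0, Nat.add_sub_add_right]
    have hmrec := hm (n + 2) (by omega)
    have h2 : (n + 2 : ℕ) - 1 = n + 1 := by omega
    have h3 : (n + 2 : ℕ) - 2 = n := by omega
    rw [h2, h3] at hmrec
    have hIcc : ∑ i ∈ Icc 1 n, ((m i : ℝ) * m (n + 1 - i))
        = ∑ i ∈ range n, (m (i+1) : ℝ) * m (n - i) := by
      have he : Icc 1 n = Ico 1 (n+1) := rfl
      rw [he, Finset.sum_Ico_eq_sum_range]
      refine sum_congr rfl fun i hi => ?_
      have h4 : n + 1 - (1 + i) = n - i := by omega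
      rw [h4, add_comm 1 i]
    have hcast : (m (n+2) : ℝ) = (m (n+1) : ℝ) + ∑ i ∈ range n, (m (i+1):ℝ) * m (n-i) := by
      rw [hmrec]
      push_cast
      rw [hIcc]
    calc a (n+2) = ((m (n+1):ℝ) + ∑ i ∈ range n, (m (i+1):ℝ) * (m (n-i):ℝ)) * x^(n+2) := by
          show (m (n+2):ℝ) * x^(n+2) = _
          rw [hcast]
    _ = x * a (n+1) + x * ∑ i ∈ range n, a (i+1) * a (n-i) := by
          show _ = x * ((m (n+1):ℝ) * x^(n+1))
            + x * ∑ i ∈ range n, ((m (i+1):ℝ) * x^(i+1)) * ((m (n-i):ℝ) * x^(n-i))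
          rw [add_mul, sum_mul, mul_sum]
          congr 1
          · ring
          · refine sum_congr rfl fun i hi => ?_
            simp only [mem_range] at hi
            have hpow : x^(i+1) * x^(n-i) = x^(n+1) := by
              rw [← pow_add]; congr 1; omega
            calc (m (i+1):ℝ) * (m (n-i):ℝ) * x^(n+2)
                = (m (i+1):ℝ) * (m (n-i):ℝ) * (x^(i+1) * x^(n-i)) * x := by rw [hpow]; ring
              _ = x * ((m (i+1):ℝ) * x^(i+1) * ((m (n-i):ℝ) * x^(n-i))) := by ring
    _ = x * a (n+1) + x * c (n+1) := by rw [hc1]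
  -- the limit L
  have hD : (0:ℝ) ≤ 1 - 2*x - 3*x^2 := by nlinarith
  set s := Real.sqrt (1 - 2*x - 3*x^2) with hs_def
  have hs0 : 0 ≤ s := Real.sqrt_nonneg _
  have hs2 : s^2 = 1 - 2*x - 3*x^2 := Real.sq_sqrt hD
  have hsle : s ≤ 1 - x := by nlinarith [hs2, hs0]
  set L : ℝ := (1 - x - s) / (2*x) with hL_def
  have hL2 : 2 * x * L = 1 - x - s := by
    rw [hL_def]; field_simp
  have hL0 : 0 ≤ L := div_nonneg (by linarith) (by linarith)
  have hsub : s = 1 - x - 2*x*L := by linarith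
  have hpoly : (1 - x - 2*x*L)^2 = 1 - 2*x - 3*x^2 := by rw [← hsub]; exact hs2
  have h4L : (4*x)*(x + x*L + x*L^2) = (4*x)*L := by linear_combination hpoly
  have hLfix : x + x*L + x*L^2 = L := mul_left_cancel₀ (by positivity) h4L
  -- partial sum bound
  have hSineq : ∀ N : ℕ, ∑ n ∈ range (N+2), a n
      ≤ x + x * (∑ n ∈ range (N+1), a n) + x * (∑ n ∈ range (N+1), a n)^2 := by
    intro N
    have e1 : ∑ n ∈ range (N+2), a n = a 0 + a 1 + ∑ n ∈ range N, a (2 + n) := by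
      rw [show N + 2 = 2 + N by omega, Finset.sum_range_add]
      simp [Finset.sum_range_succ]
    rw [e1, ha0, ha1]
    have e2 : ∑ n ∈ range N, a (2 + n)
        = x * (∑ n ∈ range N, a (n+1)) + x * (∑ n ∈ range N, c (n+1)) := by
      rw [mul_sum, mul_sum, ← sum_add_distrib]
      refine sum_congr rfl fun n _ => ?_
      rw [show 2 + n = n + 2 by omega, hkey n]
    rw [e2]
    have e3 : ∑ n ∈ range N, a (n+1) ≤ ∑ n ∈ range (N+1), a n := by
      rw [sum_range_succ' a N]
      simp [ha0]
    have e4 : ∑ n ∈ range N, c (n+1) ≤ (∑ n ∈ range (N+1), a n)^2 := by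
      have he : ∑ n ∈ range N, c (n+1) = ∑ n ∈ range (N+1), c n := by
        rw [sum_range_succ' c N]
        simp [hc_def, ha0]
      rw [he]
      exact tri_le_sq a ha (N+1)
    have m1 := mul_le_mul_of_nonneg_left e3 hx.le
    have m2 := mul_le_mul_of_nonneg_left e4 hx.le
    linarith
  have hSb : ∀ N : ℕ, ∑ n ∈ range N, a n ≤ L := by
    intro N
    induction N using Nat.twoStepInduction with
    | zero => simpa using hL0
    | one => simpa [ha0] using hL0
    | more N ih1 ih2 =>
        refine (hSineq N).trans ?_
        have h0 : 0 ≤ ∑ n ∈ range (N+1), a n := sum_nonneg fun i _ => ha _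
        have m1 := mul_le_mul_of_nonneg_left ih2 hx.le
        have m2 : (∑ n ∈ range (N+1), a n)^2 ≤ L^2 := by nlinarith
        have m3 := mul_le_mul_of_nonneg_left m2 hx.le
        linarith
  -- summability
  have hSumm : Summable a := summable_of_sum_range_le ha hSb
  set T := ∑' n, a n with hT_def
  have hTle : T ≤ L := Summable.tsum_le_of_sum_range_le hSumm hSb
  -- Cauchy product
  have hnorm : Summable fun n => ‖a n‖ := by
    simpa [Real.norm_of_nonneg (ha _)] using hSumm
  have hcsum : Summable c := by
    have := summable_norm_sum_mul_range_of_summable_norm hnorm hnorm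
    rw [← summable_norm_iff]
    exact this
  have hcval : T * T = ∑' n, c n :=
    tsum_mul_tsum_eq_tsum_sum_range_of_summable_norm hnorm hnorm
  -- functional equation
  have hshift1 : ∑' n, a (n+1) = T := by
    have h := Summable.sum_add_tsum_nat_add 1 hSumm
    simp only [Finset.sum_range_one, ha0, zero_add] at h
    rw [← hT_def] at h
    exact h
  have hc0 : c 0 = 0 := by simp [hc_def, ha0]
  have hshift2 : ∑' n, c (n+1) = T * T := by
    have h := Summable.sum_add_tsum_nat_add 1 hcsum
    simp only [Finset.sum_range_one, hc0, zero_add] at h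
    rw [hcval]
    exact h
  have hfe : T = x + x * T + x * (T * T) := by
    have h1 := Summable.sum_add_tsum_nat_add 2 hSumm
    have h2 : ∑ i ∈ range 2, a i = x := by
      rw [Finset.sum_range_succ, Finset.sum_range_one, ha0, ha1]; ring
    rw [h2] at h1
    have s1 : Summable (fun n => x * a (n+1)) :=
      ((summable_nat_add_iff 1).mpr hSumm).mul_left x
    have s2 : Summable (fun n => x * c (n+1)) :=
      ((summable_nat_add_iff 1).mpr hcsum).mul_left x
    have h3 : ∑' (i : ℕ), a (i + 2) = x * T + x * (T * T) := by
      rw [tsum_congr hkey, Summable.tsum_add s1 s2, tsum_mul_left, tsum_mul_left, hshift1, hshift2]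
    rw [h3, ← hT_def] at h1
    linarith
  -- T = L
  have hq : x * T^2 + (x-1) * T + x = 0 := by linear_combination -hfe
  have hLq : x * L^2 + (x-1) * L + x = 0 := by linear_combination hLfix
  have key : (L - T) * (x*(L+T) + x - 1) = 0 := by linear_combination hLq - hq
  have hxT : x * T ≤ x * L := mul_le_mul_of_nonneg_left hTle hx.le
  have hTL : T = L := by
    rcases mul_eq_zero.1 key with h | h
    · linarith
    · have h' : x*L + x*T + x - 1 = 0 := by linear_combination h
      have hseq : s = 0 := le_antisymm (by linarith) hs0
      have hxTL : x * T = x * L := by linarith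
      exact mul_left_cancel₀ hx0 hxTL
  have hfin := hSumm.hasSum
  rw [← hT_def, hTL, hL_def] at hfin
  exact hfin
end

section
/- Let a, b : ℕ → ℝ and let α, β, r be real numbers with α > β ≥ 0. Suppose: (i) the power series ∑ a(n)xⁿ has radius of convergence α; (ii) the power series ∑ b(n)xⁿ has radius of convergence β; (iii) b(n) ≠ 0 for all sufficiently large n and b(n−1)/b(n) → r as n → ∞; and (iv) A(r) := ∑_{n=0}^∞ a(n)rⁿ ≠ 0 (this series converges absolutely since |r| = β < α). Then, with c(n) := ∑_{k=0}^{n} a(k)·b(n−k), one has c(n)/b(n) → A(r) as n → ∞, i.e. c(n) ∼ A(r)·b(n). -/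
open Filter

/-- Bender's lemma: if `∑ a(n)xⁿ` has radius of convergence `α`,
`∑ b(n)xⁿ` has radius of convergence `β`, with `α > β ≥ 0`, `b(n) ≠ 0` eventually,
`b(n−1)/b(n) → r`, and `A(r) = ∑ a(n)rⁿ ≠ 0`, then with
`c(n) = ∑_{k=0}^n a(k)b(n−k)` one has `c(n)/b(n) → A(r)`, i.e. `c(n) ∼ A(r)·b(n)`. -/
theorem benders_lemma
    (a b : ℕ → ℝ) (α β r : ℝ) (hβ : 0 ≤ β) (hαβ : β < α)
    (ha_conv : ∀ x : ℝ, |x| < α → Summable (fun n : ℕ => a n * x ^ n))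
    (ha_div : ∀ x : ℝ, α < |x| → ¬ Summable (fun n : ℕ => a n * x ^ n))
    (hb_conv : ∀ x : ℝ, |x| < β → Summable (fun n : ℕ => b n * x ^ n))
    (hb_div : ∀ x : ℝ, β < |x| → ¬ Summable (fun n : ℕ => b n * x ^ n))
    (hbne : ∀ᶠ n in atTop, b n ≠ 0)
    (hr : Tendsto (fun n : ℕ => b (n - 1) / b n) atTop (nhds r))
    (hA : (∑' n : ℕ, a n * r ^ n) ≠ 0) :
    Tendsto (fun n : ℕ => (∑ k ∈ Finset.range (n + 1), a k * b (n - k)) / b n)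
      atTop (nhds (∑' n : ℕ, a n * r ^ n)) := by
  clear ha_div hb_conv hA
  have hα0 : 0 < α := lt_of_le_of_lt hβ hαβ
  -- Step 1 : |r| ≤ β
  have hrβ : |r| ≤ β := by
    by_contra h
    push_neg at h
    have hr0 : r ≠ 0 := by
      intro h0
      rw [h0, abs_zero] at h
      exact absurd h (not_lt.2 hβ)
    have habs : 0 < |r| := abs_pos.2 hr0
    set x := (β + |r|) / 2 with hxdef
    have hx0 : 0 < x := by positivity
    have hxβ : β < x := by rw [hxdef]; linarith
    have hxr : x < |r| := by rw [hxdef]; linarith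
    refine hb_div x (by rwa [abs_of_pos hx0]) ?_
    -- ratio test
    have h1 : Tendsto (fun n : ℕ => b n / b (n + 1)) atTop (nhds r) := by
      have := hr.comp (tendsto_add_atTop_nat 1)
      simpa [Function.comp_def] using this
    have h2 : Tendsto (fun n : ℕ => |b n| / |b (n + 1)|) atTop (nhds |r|) := by
      simpa [abs_div] using h1.abs
    have h3 : Tendsto (fun n : ℕ => |b (n + 1)| / |b n|) atTop (nhds |r|⁻¹) := by
      simpa [one_div] using h2.inv₀ (ne_of_gt habs)
    have hne : ∀ᶠ n in atTop, b n * x ^ n ≠ 0 := by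
      filter_upwards [hbne] with n hn
      exact mul_ne_zero hn (pow_ne_zero n (ne_of_gt hx0))
    refine summable_of_ratio_test_tendsto_lt_one
      (show |r|⁻¹ * x < 1 by
        rw [inv_mul_lt_iff₀ habs, mul_one]; exact hxr) hne ?_
    have key : Tendsto (fun n : ℕ => |b (n + 1)| / |b n| * x) atTop (nhds (|r|⁻¹ * x)) :=
      h3.mul tendsto_const_nhds
    refine key.congr' ?_
    filter_upwards [hbne] with n hn
    have hxn : (0:ℝ) < x ^ n := pow_pos hx0 n
    have hbn' : |b n| ≠ 0 := abs_ne_zero.2 hn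
    rw [Real.norm_eq_abs, Real.norm_eq_abs, abs_mul, abs_mul, abs_pow, abs_pow,
      abs_of_pos hx0, pow_succ]
    field_simp
  have hrα : |r| < α := lt_of_le_of_lt hrβ hαβ
  -- Step 2 : constants
  set ρ := (|r| + α) / 2 with hρdef
  have hρ0 : 0 < ρ := by positivity
  have hρr : |r| < ρ := by rw [hρdef]; linarith
  have hρα : ρ < α := by rw [hρdef]; linarith
  -- eventual ratio bound
  have hev : ∀ᶠ n in atTop, b n ≠ 0 ∧ |b (n - 1)| ≤ ρ * |b n| := by
    have h4 : Tendsto (fun n : ℕ => |b (n - 1) / b n|) atTop (nhds |r|) := hr.abs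
    have h5 : ∀ᶠ n in atTop, |b (n - 1) / b n| ≤ ρ := h4.eventually_le_const hρr
    filter_upwards [hbne, h5] with n hn h5n
    refine ⟨hn, ?_⟩
    rw [abs_div] at h5n
    calc |b (n - 1)| = |b (n - 1)| / |b n| * |b n| := by
          field_simp
      _ ≤ ρ * |b n| := by
          apply mul_le_mul_of_nonneg_right h5n (abs_nonneg _)
  obtain ⟨N₀, hN₀⟩ := eventually_atTop.1 hev
  set N := N₀ + 1 with hNdef
  have hNprop : ∀ n, N ≤ n → b n ≠ 0 ∧ |b (n - 1)| ≤ ρ * |b n| := fun n hn =>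
    hN₀ n (le_trans (Nat.le_succ N₀) hn)
  have hbN : 0 < |b N| := abs_pos.2 (hNprop N le_rfl).1
  -- chain bound
  have hchain : ∀ m, N ≤ m → ∀ j, |b m| ≤ ρ ^ j * |b (m + j)| := by
    intro m hm j
    induction j with
    | zero => simp
    | succ j ih =>
      have h6 : |b (m + j)| ≤ ρ * |b (m + j + 1)| := by
        have := (hNprop (m + j + 1) (by omega)).2
        simpa using this
      calc |b m| ≤ ρ ^ j * |b (m + j)| := ih
        _ ≤ ρ ^ j * (ρ * |b (m + j + 1)|) :=
            mul_le_mul_of_nonneg_left h6 (le_of_lt (pow_pos hρ0 j))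
        _ = ρ ^ (j + 1) * |b (m + j + 1)| := by ring
  have hupper : ∀ n k, k ≤ n → N ≤ n - k → |b (n - k)| ≤ ρ ^ k * |b n| := by
    intro n k hk hNk
    have := hchain (n - k) hNk k
    rwa [Nat.sub_add_cancel hk] at this
  have hlower : ∀ n, N ≤ n → |b N| ≤ ρ ^ (n - N) * |b n| := by
    intro n hn
    have := hchain N le_rfl (n - N)
    rwa [Nat.add_sub_cancel' hn] at this
  -- bound on initial values
  set M := ∑ m ∈ Finset.range (N + 1), |b m| with hMdef
  have hM : ∀ m, m ≤ N → |b m| ≤ M := by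
    intro m hm
    exact Finset.single_le_sum (f := fun m => |b m|) (fun i _ => abs_nonneg _)
      (Finset.mem_range.2 (Nat.lt_succ_of_le hm))
  have hM0 : 0 ≤ M := le_trans (abs_nonneg _) (hM 0 (Nat.zero_le _))
  set D := (max 1 ρ⁻¹) ^ N with hDdef
  have hD1 : 1 ≤ max 1 ρ⁻¹ := le_max_left _ _
  have hD0 : 0 < D := pow_pos (lt_of_lt_of_le one_pos hD1) N
  set K := max 1 (M * D / |b N|) with hKdef
  have hK1 : 1 ≤ K := le_max_left _ _
  have hK2 : M * D / |b N| ≤ K := le_max_right _ _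
  -- summability of the dominating series
  set ρ' := (ρ + α) / 2 with hρ'def
  have hρ'0 : 0 < ρ' := by positivity
  have hρρ' : ρ < ρ' := by rw [hρ'def]; linarith
  have hρ'α : ρ' < α := by rw [hρ'def]; linarith
  have hsum' : Summable (fun n : ℕ => a n * ρ' ^ n) :=
    ha_conv ρ' (by rwa [abs_of_pos hρ'0])
  obtain ⟨C, hC⟩ := (hsum'.tendsto_atTop_zero.abs.bddAbove_range).imp
    (fun C hC => fun n => hC (Set.mem_range_self n))
  have hC0 : 0 ≤ C := le_trans (abs_nonneg _) (hC 0)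
  have hgeo : Summable (fun k : ℕ => C * (ρ / ρ') ^ k) :=
    (summable_geometric_of_lt_one (by positivity)
      (by rw [div_lt_one hρ'0]; exact hρρ')).mul_left C
  have hbase : Summable (fun k : ℕ => |a k| * ρ ^ k) := by
    refine hgeo.of_nonneg_of_le (fun k => by positivity) (fun k => ?_)
    have : |a k * ρ' ^ k| * (ρ / ρ') ^ k = |a k| * ρ ^ k := by
      rw [abs_mul, abs_pow, abs_of_pos hρ'0, mul_assoc, ← mul_pow,
        mul_comm ρ' (ρ / ρ'), div_mul_cancel₀ _ (ne_of_gt hρ'0)]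
    rw [← this]
    exact mul_le_mul_of_nonneg_right (hC k) (by positivity)
  have hbound_sum : Summable (fun k : ℕ => K * (|a k| * ρ ^ k)) := hbase.mul_left K
  -- the doubly-indexed function
  set f : ℕ → ℕ → ℝ := fun n k => if k ≤ n then a k * (b (n - k) / b n) else 0 with hfdef
  -- pointwise limits
  have hTk : ∀ k : ℕ, Tendsto (fun n : ℕ => b (n - k) / b n) atTop (nhds (r ^ k)) := by
    intro k
    induction k with
    | zero =>
      rw [pow_zero]
      refine Tendsto.congr' ?_ tendsto_const_nhds
      filter_upwards [hbne] with n hn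
      simp [div_self hn]
    | succ k ih =>
      have hnk : Tendsto (fun n : ℕ => b (n - k - 1) / b (n - k)) atTop (nhds r) :=
        hr.comp (tendsto_sub_atTop_nat k)
      have hbnk : ∀ᶠ n in atTop, b (n - k) ≠ 0 := (tendsto_sub_atTop_nat k).eventually hbne
      have hmul := hnk.mul ih
      rw [show r * r ^ k = r ^ (k + 1) by ring] at hmul
      refine Tendsto.congr' ?_ hmul
      filter_upwards [hbnk] with n hn
      rw [div_mul_div_cancel₀ hn, Nat.sub_sub]
  have hptwise : ∀ k : ℕ, Tendsto (fun n => f n k) atTop (nhds (a k * r ^ k)) := by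
    intro k
    refine Tendsto.congr' ?_ (((hTk k).const_mul (a k)))
    filter_upwards [eventually_ge_atTop k] with n hn
    simp [hfdef, hn]
  -- the uniform bound
  have hbound : ∀ᶠ n in atTop, ∀ k, ‖f n k‖ ≤ K * (|a k| * ρ ^ k) := by
    filter_upwards [eventually_ge_atTop N] with n hn k
    have hpos : (0:ℝ) ≤ K * (|a k| * ρ ^ k) := by positivity
    by_cases hk : k ≤ n
    · have hbn : 0 < |b n| := abs_pos.2 (hNprop n hn).1
      rw [hfdef]
      simp only [hk, if_true, Real.norm_eq_abs, abs_mul, abs_div]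
      by_cases hNk : N ≤ n - k
      · -- small k : ratio bound
        have h7 : |b (n - k)| / |b n| ≤ ρ ^ k := by
          rw [div_le_iff₀ hbn]
          exact hupper n k hk hNk
        calc |a k| * (|b (n - k)| / |b n|) ≤ |a k| * ρ ^ k :=
              mul_le_mul_of_nonneg_left h7 (abs_nonneg _)
          _ ≤ K * (|a k| * ρ ^ k) := le_mul_of_one_le_left (by positivity) hK1
      · -- large k
        push_neg at hNk
        have h8 : |b (n - k)| ≤ M := hM (n - k) (le_of_lt hNk)
        have h9 : |b (n - k)| / |b n| ≤ M * ρ ^ (n - N) / |b N| := by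
          rw [div_le_div_iff₀ hbn hbN]
          calc |b (n - k)| * |b N| ≤ M * (ρ ^ (n - N) * |b n|) :=
                mul_le_mul h8 (hlower n hn) (abs_nonneg _) hM0
            _ = M * ρ ^ (n - N) * |b n| := by ring
        have h10 : ρ ^ (n - N) ≤ D * ρ ^ k := by
          set j := k - (n - N) with hjdef
          have hj1 : 1 ≤ j := by omega
          have hjN : j ≤ N := by omega
          have hkj : k = (n - N) + j := by omega
          have h11 : (ρ⁻¹) ^ j ≤ D := by
            calc (ρ⁻¹) ^ j ≤ (max 1 ρ⁻¹) ^ j :=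
                  pow_le_pow_left₀ (le_of_lt (inv_pos.2 hρ0)) (le_max_right _ _) j
              _ ≤ (max 1 ρ⁻¹) ^ N := pow_le_pow_right₀ hD1 hjN
          have h12 : 1 ≤ D * ρ ^ j := by
            have : (ρ⁻¹) ^ j * ρ ^ j = 1 := by
              rw [← mul_pow, inv_mul_cancel₀ (ne_of_gt hρ0), one_pow]
            calc (1:ℝ) = (ρ⁻¹) ^ j * ρ ^ j := this.symm
              _ ≤ D * ρ ^ j := mul_le_mul_of_nonneg_right h11 (by positivity)
          calc ρ ^ (n - N) = ρ ^ (n - N) * 1 := by ring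
            _ ≤ ρ ^ (n - N) * (D * ρ ^ j) :=
                mul_le_mul_of_nonneg_left h12 (by positivity)
            _ = D * ρ ^ ((n - N) + j) := by rw [pow_add]; ring
            _ = D * ρ ^ k := by rw [← hkj]
        calc |a k| * (|b (n - k)| / |b n|) ≤ |a k| * (M * ρ ^ (n - N) / |b N|) :=
              mul_le_mul_of_nonneg_left h9 (abs_nonneg _)
          _ ≤ |a k| * (M * (D * ρ ^ k) / |b N|) := by
              have h13 : M * ρ ^ (n - N) ≤ M * (D * ρ ^ k) :=
                mul_le_mul_of_nonneg_left h10 hM0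
              exact mul_le_mul_of_nonneg_left
                ((div_le_div_iff_of_pos_right hbN).2 h13) (abs_nonneg _)
          _ = M * D / |b N| * (|a k| * ρ ^ k) := by ring
          _ ≤ K * (|a k| * ρ ^ k) :=
              mul_le_mul_of_nonneg_right hK2 (by positivity)
    · rw [hfdef]
      simp only [hk, if_false, norm_zero]
      exact hpos
  -- dominated convergence
  have hmain : Tendsto (fun n => ∑' k, f n k) atTop (nhds (∑' k, a k * r ^ k)) :=
    tendsto_tsum_of_dominated_convergence hbound_sum hptwise hbound
  refine Tendsto.congr' ?_ hmain
  filter_upwards [eventually_ge_atTop N] with n hn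
  have htsum : ∑' k, f n k = ∑ k ∈ Finset.range (n + 1), f n k := by
    refine tsum_eq_sum (fun k hk => ?_)
    rw [Finset.mem_range, not_lt] at hk
    rw [hfdef]
    simp only [if_neg (by omega : ¬ k ≤ n)]
  rw [htsum, Finset.sum_div]
  refine Finset.sum_congr rfl (fun k hk => ?_)
  rw [Finset.mem_range] at hk
  rw [hfdef]
  simp only [if_pos (by omega : k ≤ n)]
  rw [mul_div_assoc]
end

section
/- Let M ∈ ℝ⟦X⟧ be the formal power series M = ∑_{n≥1} m(n)Xⁿ. For all formal power series R, V ∈ ℝ⟦X⟧ satisfying V = R + X·V + 2·X·V·M, one has (1 − 2X − 3X²)·V² = R². (Equivalently, V = R/√(1 − 2X − 3X²): the generating function for the number of vertices over all Motzkin trees whose subtree has a given property equals the generating function R for the number of Motzkin trees whose root has that property divided by √(1 − 2x − 3x²).) -/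
open PowerSeries

/-- Let `M = ∑_{n≥1} m(n)Xⁿ ∈ ℝ⟦X⟧` be the Motzkin generating function.
For all formal power series `R, V` with `V = R + X·V + 2·X·V·M`, one has
`(1 − 2X − 3X²)·V² = R²` (i.e. `V = R/√(1 − 2X − 3X²)`). -/
theorem motzkin_subtree_gf_relation
    (m : ℕ → ℕ) (hm0 : m 0 = 0) (hm1 : m 1 = 1)
    (hm : ∀ n, 2 ≤ n →
      m n = m (n - 1) + ∑ i ∈ Finset.Icc 1 (n - 2), m i * m (n - 1 - i))
    (R V : PowerSeries ℝ)
    (hV : V = R + PowerSeries.X * V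
        + 2 * PowerSeries.X * V * PowerSeries.mk (fun n => (m n : ℝ))) :
    (1 - 2 * PowerSeries.X - 3 * PowerSeries.X ^ 2) * V ^ 2 = R ^ 2 := by
  set M : PowerSeries ℝ := PowerSeries.mk (fun n => (m n : ℝ)) with hMdef
  have hM : M = X + X * M + X * M ^ 2 := by
    ext n
    rcases n with _ | _ | n
    · simp [hMdef, hm0]
    · simp [hMdef, hm1, hm0, coeff_succ_X_mul]
    · have hrec := hm (n + 2) (by omega)
      simp only [Nat.add_sub_cancel] at hrec
      have h1 : (n + 2) - 1 = n + 1 := rfl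
      rw [h1] at hrec
      rw [map_add, map_add, coeff_X, if_neg (by omega), coeff_succ_X_mul,
        coeff_succ_X_mul, sq, coeff_mul, Finset.Nat.sum_antidiagonal_eq_sum_range_succ_mk]
      simp only [hMdef, coeff_mk]
      have hsum : ∑ i ∈ Finset.range (n + 1 + 1), (m i : ℝ) * m (n + 1 - i)
          = ∑ i ∈ Finset.Icc 1 n, (m i : ℝ) * m (n + 1 - i) := by
        refine (Finset.sum_subset ?_ ?_).symm
        · intro i hi
          simp only [Finset.mem_Icc] at hi
          simp only [Finset.mem_range]; omega
        · intro i hi hni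
          simp only [Finset.mem_range] at hi
          simp only [Finset.mem_Icc, not_and, not_le] at hni
          have : i = 0 ∨ i = n + 1 := by omega
          rcases this with rfl | rfl <;> simp [hm0]
      rw [hsum]
      push_cast [hrec]
      ring
  have h1 : R = V * (1 - X - 2 * X * M) := by linear_combination -hV
  linear_combination 4 * X * V ^ 2 * hM - (R + V * (1 - X - 2 * X * M)) * h1
end

section
/- Fix an integer k ≥ 1. Define v : ℕ → ℝ by v(0) = 0 and, for n ≥ 1, v(n) = m(k)·[n = k] + v(n−1) + 2·∑_{i=1}^{n−2} v(i)·m(n−1−i), so that v(n) is the total number of vertices having exactly k vertices in their subtree, summed over all Motzkin trees with n vertices. Then v(n)/(n·m(n)) → m(k)/3ᵏ as n → ∞; that is, the probability that a uniformly random vertex of a uniformly random Motzkin tree with n vertices has exactly k vertices in its subtree tends to m(k)/3ᵏ. -/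
open Filter PowerSeries Finset

namespace MotzkinAux

variable {m : ℕ → ℕ}

section basics
variable (hm0 : m 0 = 0) (hm1 : m 1 = 1)
  (hm : ∀ n, 2 ≤ n →
      m n = m (n - 1) + ∑ i ∈ Finset.Icc 1 (n - 2), m i * m (n - 1 - i))

include hm1 hm in
lemma m_pos : ∀ n, 1 ≤ n → 1 ≤ m n := by
  intro n hn
  induction n with
  | zero => omega
  | succ p ih =>
    rcases Nat.lt_or_ge p 1 with h | h
    · have : p = 0 := by omega
      subst this; simpa using hm1.ge
    · have h2 : 2 ≤ p + 1 := by omega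
      have := hm (p+1) h2
      simp only [Nat.add_sub_cancel] at this
      have hp := ih h
      omega

include hm in
lemma hmR : ∀ s : ℕ, 1 ≤ s → (m (s+1) : ℝ) =
    m s + ∑ i ∈ Icc 1 (s-1), (m i : ℝ) * m (s-i) := by
  intro s hs
  have := hm (s+1) (by omega)
  simp only [Nat.add_sub_cancel] at this
  rw [this]
  push_cast
  rfl

include hm0 hm in
lemma hC : ∀ s : ℕ, 1 ≤ s → ∑ b ∈ range (s+1), (m b : ℝ) * m (s-b) =
    (m (s+1) : ℝ) - m s := by
  intro s hs
  rw [hmR hm s hs]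
  have hsub : Icc 1 (s-1) ⊆ range (s+1) := by
    intro x hx; simp at hx ⊢; omega
  rw [← Finset.sum_subset hsub]
  · ring
  · intro x hx hnx
    simp at hx hnx
    rcases Nat.lt_or_ge x 1 with h | h
    · have : x = 0 := by omega
      subst this; simp [hm0]
    · have : x = s := by omega
      subst this; simp [hm0]

end basics

section ps
variable {m : ℕ → ℕ} (hm0 : m 0 = 0) (hm1 : m 1 = 1)
  (hm : ∀ n, 2 ≤ n →
      m n = m (n - 1) + ∑ i ∈ Finset.Icc 1 (n - 2), m i * m (n - 1 - i))

noncomputable def MM (m : ℕ → ℕ) : PowerSeries ℝ := PowerSeries.mk fun n => (m n : ℝ)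

lemma coeff_MM {m : ℕ → ℕ} (n : ℕ) : coeff n (MM m) = (m n : ℝ) := coeff_mk n _

include hm0 hm1 hm in
lemma FE : MM m = X + X * MM m + X * (MM m * MM m) := by
  ext n
  rcases n with _ | n
  · simp [coeff_MM, hm0]
  rcases n with _ | s
  · have e : (1:ℕ) = 0 + 1 := rfl
    rw [map_add, map_add, e, coeff_succ_X_mul, coeff_succ_X_mul]
    simp [coeff_MM, hm0, hm1, MM]
  · -- coefficient s+2
    simp only [map_add, coeff_MM, coeff_succ_X_mul, coeff_X]
    have h1 : (if s + 2 = 1 then (1:ℝ) else 0) = 0 := by simp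
    rw [h1, zero_add]
    have h2 : coeff (s+1) (MM m * MM m) =
        ∑ b ∈ range (s+2), (m b : ℝ) * m (s+1-b) := by
      rw [coeff_mul, Finset.Nat.sum_antidiagonal_eq_sum_range_succ_mk]
      simp [coeff_MM]
    rw [h2, hC hm0 hm (s+1) (by omega)]
    push_cast
    ring

include hm0 hm1 hm in
lemma keyPS : (1 - 2*X - 3*(X*X)) * (d⁄dX ℝ (MM m)) = 1 - MM m * MM m := by
  have hFE := FE hm0 hm1 hm
  set M := MM m with hMdef
  set D := d⁄dX ℝ M with hDdef
  have hd : D = 1 + (M + X * D) + (X * (M * D) * 2 + (M*M)) := by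
    have h := congrArg (d⁄dX ℝ) hFE
    rw [map_add, map_add, derivative_X, Derivation.leibniz, Derivation.leibniz,
      Derivation.leibniz, derivative_X] at h
    simp only [smul_eq_mul, mul_one] at h
    rw [← hDdef] at h
    linear_combination h
  have h2' : (1 - X - 2*(X*M)) * D = 1 + M + M*M := by linear_combination hd
  have hS : (1 - X - 2*(X*M))*(1 - X - 2*(X*M)) = 1 - 2*X - 3*(X*X) := by
    linear_combination (-4*(X : PowerSeries ℝ)) * hFE
  have hW : (1 - X - 2*(X*M))*(1 + M + M*M) = 1 - M*M := by
    linear_combination (1 + 2*M) * hFE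
  rw [← hS, mul_assoc, h2', hW]

include hm0 hm1 hm in
lemma L5'' : ∀ s : ℕ, ((s:ℝ)+3) * m (s+2) = (2*s+3) * m (s+1) + 3*s*m s := by
  intro s
  have hk := keyPS hm0 hm1 hm
  have hk2 : d⁄dX ℝ (MM m) = 1 - MM m * MM m + 2*(X*(d⁄dX ℝ (MM m)))
      + 3*(X*(X*(d⁄dX ℝ (MM m)))) := by linear_combination hk
  have c1 : coeff (s+1) (d⁄dX ℝ (MM m)) = (m (s+2) : ℝ) * (s+2) := by
    rw [coeff_derivative, coeff_MM]; push_cast; try ring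
  have c2 : coeff (s+1) (MM m * MM m) = (m (s+2) : ℝ) - m (s+1) := by
    rw [coeff_mul, Finset.Nat.sum_antidiagonal_eq_sum_range_succ_mk]
    simp only [coeff_MM]
    exact hC hm0 hm (s+1) (by omega)
  have c3 : coeff (s+1) ((C 2)*(X*(d⁄dX ℝ (MM m)))) = 2 * ((m (s+1):ℝ) * (s+1)) := by
    rw [coeff_C_mul, coeff_succ_X_mul, coeff_derivative, coeff_MM]
  have hco2 : (m (s+2) : ℝ) * (s+2) = - ((m (s+2):ℝ) - m (s+1)) + 2*((m (s+1):ℝ)*(s+1))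
      + 3 * coeff (s+1) (X*(X*(d⁄dX ℝ (MM m)))) := by
    have e2 : ((C 2 : ℝ⟦X⟧)) = 2 := map_ofNat (C (R := ℝ)) 2
    have e3 : ((C 3 : ℝ⟦X⟧)) = 3 := map_ofNat (C (R := ℝ)) 3
    have hk3 : d⁄dX ℝ (MM m) = 1 - MM m * MM m + (C 2)*(X*(d⁄dX ℝ (MM m)))
        + (C 3)*(X*(X*(d⁄dX ℝ (MM m)))) := by
      rw [e2, e3]; exact hk2
    have hco := congrArg (coeff (s+1)) hk3
    rw [c1, map_add, map_add, map_sub, c2, c3, coeff_C_mul] at hco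
    simpa using hco
  rcases s with _ | t
  · have h0 : coeff (0+1) (X*(X*(d⁄dX ℝ (MM m)))) = 0 := by
      rw [coeff_succ_X_mul, coeff_zero_X_mul]
    rw [h0] at hco2
    push_cast at hco2 ⊢
    linarith
  · have h0 : coeff (t+1+1) (X*(X*(d⁄dX ℝ (MM m)))) = (m (t+1) : ℝ) * ((t:ℝ)+1) := by
      rw [coeff_succ_X_mul, coeff_succ_X_mul, coeff_derivative, coeff_MM]
    rw [h0] at hco2
    push_cast at hco2 ⊢
    linarith

end ps

noncomputable def TT (m : ℕ → ℕ) : ℕ → ℝ := fun n => 1 + 2 * ∑ j ∈ range n, (j:ℝ) * m j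

section tpart
variable {m : ℕ → ℕ} (hm0 : m 0 = 0) (hm1 : m 1 = 1)
  (hm : ∀ n, 2 ≤ n →
      m n = m (n - 1) + ∑ i ∈ Finset.Icc 1 (n - 2), m i * m (n - 1 - i))

lemma TT_succ (n : ℕ) : TT m (n+1) = TT m n + 2*((n:ℝ) * m n) := by
  simp [TT, sum_range_succ]; ring

lemma TT_pos (n : ℕ) : (1:ℝ) ≤ TT m n := by
  have : (0:ℝ) ≤ ∑ j ∈ range n, (j:ℝ) * m j :=
    Finset.sum_nonneg fun j _ => by positivity
  simp only [TT]; linarith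

lemma TT_pos' (n : ℕ) : (0:ℝ) < TT m n := lt_of_lt_of_le one_pos (TT_pos n)

lemma TT_one : TT m 1 = 1 := by simp [TT]

include hm0 hm in
lemma hA : ∀ s : ℕ, ∑ b ∈ range (s+1), (m b : ℝ) * TT m (s - b) = s * m s := by
  intro s
  induction s with
  | zero => simp [hm0]
  | succ s ih =>
    rcases Nat.eq_zero_or_pos s with hs0 | hs1
    · subst hs0
      simp [sum_range_succ, hm0, TT]
    -- peel the last term b = s+1
    rw [sum_range_succ]
    have hstep : ∑ b ∈ range (s+1), (m b : ℝ) * TT m (s + 1 - b)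
        = ∑ b ∈ range (s+1), ((m b : ℝ) * TT m (s - b)
            + 2 * ((m b : ℝ) * (((s-b : ℕ)):ℝ) * m (s-b))) := by
      apply Finset.sum_congr rfl
      intro b hb
      simp only [mem_range] at hb
      have hb' : b ≤ s := by omega
      have : s + 1 - b = (s - b) + 1 := by omega
      rw [this, TT_succ]
      ring
    rw [hstep, Finset.sum_add_distrib, ih]
    have hD : ∑ b ∈ range (s+1), 2 * ((m b : ℝ) * (((s-b : ℕ)):ℝ) * m (s-b))
        = (s:ℝ) * ((m (s+1) : ℝ) - m s) := by
      have hrefl : ∑ b ∈ range (s+1), ((m b : ℝ) * (((s-b : ℕ)):ℝ) * m (s-b))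
          = ∑ b ∈ range (s+1), ((m (s-b) : ℝ) * (((s-(s-b) : ℕ)):ℝ) * m (s-(s-b))) := by
        rw [← Finset.sum_range_reflect]
        apply Finset.sum_congr rfl
        intro b hb
        simp only [mem_range] at hb
        congr 2 <;> omega
      have htwo : 2 * ∑ b ∈ range (s+1), ((m b : ℝ) * (((s-b : ℕ)):ℝ) * m (s-b))
          = (s:ℝ) * ∑ b ∈ range (s+1), (m b : ℝ) * m (s-b) := by
        rw [two_mul]
        nth_rewrite 2 [hrefl]
        rw [← Finset.sum_add_distrib, Finset.mul_sum]
        apply Finset.sum_congr rfl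
        intro b hb
        simp only [mem_range] at hb
        have hb' : b ≤ s := by omega
        have h1 : s - (s - b) = b := by omega
        rw [h1]
        have h2 : ((s - b : ℕ) : ℝ) = (s:ℝ) - b := by
          rw [Nat.cast_sub hb']
        have h3 : ((b:ℕ):ℝ) ≤ (s:ℝ) := by exact_mod_cast hb'
        rw [h2]
        ring
      rw [← Finset.mul_sum, htwo, hC hm0 hm s hs1]
    rw [hD]
    have : s + 1 - (s+1) = 0 := by omega
    rw [this]
    simp only [TT]
    push_cast
    ring

include hm0 hm1 hm in
lemma L5' : ∀ s : ℕ, 2*((s:ℝ)+2) * m (s+1) = TT m (s+1) + 3 * TT m s := by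
  intro s
  induction s with
  | zero =>
    have h1 : TT m 0 = 1 := by simp [TT]
    rw [TT_one, h1, hm1]
    norm_num
  | succ s ih =>
    have h5 := L5'' hm0 hm1 hm s
    have t1 := TT_succ (m := m) (s+1)
    have t2 := TT_succ (m := m) s
    push_cast at t1 t2 ⊢
    linarith

include hm0 hm1 hm in
lemma Rrec : ∀ s : ℕ, ((s:ℝ)+2) * TT m (s+2) = (2*s+3) * TT m (s+1) + 3*((s:ℝ)+1) * TT m s := by
  intro s
  have h1 := L5' hm0 hm1 hm s
  have t1 := TT_succ (m := m) (s+1)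
  push_cast at t1
  nlinarith [h1, t1]

include hm0 hm1 hm in
lemma ratio_bounds : ∀ n : ℕ, 1 ≤ n →
    TT m (n+1) ≤ 3 * TT m n ∧ (3*(n:ℝ)+1) * TT m n ≤ ((n:ℝ)+1) * TT m (n+1) := by
  intro n hn
  induction n with
  | zero => omega
  | succ t ih =>
    rcases Nat.eq_zero_or_pos t with ht0 | ht1
    · subst ht0
      have h2 : TT m 2 = 3 := by
        simp [TT, sum_range_succ, hm1]; norm_num
      rw [TT_one, h2]
      norm_num
    · obtain ⟨iu, il⟩ := ih ht1
      have hR := Rrec hm0 hm1 hm t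
      have hTpos := TT_pos' (m := m) t
      have hTpos1 := TT_pos' (m := m) (t+1)
      have hTpos2 := TT_pos' (m := m) (t+2)
      have ht1R : (1:ℝ) ≤ (t:ℝ) := by exact_mod_cast ht1
      constructor
      · -- (t+2)*T(t+2) ≥ ... upper bound T(t+2) ≤ 3 T(t+1)
        push_cast
        nlinarith [il, hR, hTpos1, ht1R]
      · push_cast
        nlinarith [iu, hR, hTpos, ht1R]

include hm0 hm1 hm in
lemma ratio_tendsto : Tendsto (fun n : ℕ => TT m (n+1) / TT m n) atTop (nhds 3) := by
  have hlo : Tendsto (fun n : ℕ => 3 - 2 * (1/((n:ℝ)+1))) atTop (nhds 3) := by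
    have h0 := tendsto_one_div_add_atTop_nhds_zero_nat (𝕜 := ℝ)
    have := h0.const_mul (2:ℝ)
    have h3 : Tendsto (fun _ : ℕ => (3:ℝ)) atTop (nhds 3) := tendsto_const_nhds
    simpa using h3.sub this
  apply tendsto_of_tendsto_of_tendsto_of_le_of_le' hlo tendsto_const_nhds
  · filter_upwards [eventually_ge_atTop 1] with n hn
    obtain ⟨_, hl⟩ := ratio_bounds hm0 hm1 hm n hn
    have hTpos := TT_pos' (m := m) n
    have hn1 : (0:ℝ) < (n:ℝ)+1 := by positivity
    have key : 3 - 2 * (1/((n:ℝ)+1)) ≤ TT m (n+1) / TT m n := by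
      rw [le_div_iff₀ hTpos]
      rw [← sub_nonneg]
      have expand : TT m (n+1) - (3 - 2*(1/((n:ℝ)+1))) * TT m n
          = (((n:ℝ)+1) * TT m (n+1) - (3*(n:ℝ)+1) * TT m n) / ((n:ℝ)+1) := by
        field_simp
        ring
      rw [expand]
      apply div_nonneg _ (le_of_lt hn1)
      linarith
    exact key
  · filter_upwards [eventually_ge_atTop 1] with n hn
    obtain ⟨hu, _⟩ := ratio_bounds hm0 hm1 hm n hn
    have hTpos := TT_pos' (m := m) n
    rw [div_le_iff₀ hTpos]
    linarith

include hm0 hm1 hm in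
lemma shift_tendsto : ∀ j : ℕ, Tendsto (fun n : ℕ => TT m (n-j) / TT m n) atTop
    (nhds ((1/3:ℝ)^j)) := by
  have hstep : Tendsto (fun s : ℕ => TT m (s-1) / TT m s) atTop (nhds (1/3:ℝ)) := by
    have hinv : Tendsto (fun n : ℕ => TT m n / TT m (n+1)) atTop (nhds (1/3:ℝ)) := by
      have h := (ratio_tendsto hm0 hm1 hm).inv₀ (by norm_num)
      simp only [inv_div] at h
      rw [one_div]
      exact h
    have hcomp := hinv.comp (tendsto_sub_atTop_nat 1)
    apply hcomp.congr'
    filter_upwards [eventually_ge_atTop 1] with n hn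
    have : n - 1 + 1 = n := by omega
    simp only [Function.comp_apply, this]
  intro j
  induction j with
  | zero =>
    rw [pow_zero]
    apply Tendsto.congr' _ tendsto_const_nhds
    filter_upwards with n
    rw [Nat.sub_zero, div_self (ne_of_gt (TT_pos' n))]
  | succ j ih =>
    have hfac := hstep.comp (tendsto_sub_atTop_nat j)
    have := hfac.mul ih
    rw [pow_succ']
    apply this.congr'
    filter_upwards [eventually_ge_atTop (j+1)] with n hn
    have e1 : n - j - 1 = n - (j+1) := by omega
    simp only [Function.comp_apply, e1]
    rw [div_mul_div_cancel₀]
    exact ne_of_gt (TT_pos' (n-j))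

include hm0 hm in
lemma hA' : ∀ s : ℕ, ∑ j ∈ range (s+1), TT m j * (m (s-j):ℝ) = s * m s := by
  intro s
  have h := hA hm0 hm s
  rw [← Finset.sum_range_reflect] at h
  rw [← h]
  apply Finset.sum_congr rfl
  intro j hj
  simp only [mem_range] at hj
  have h1 : s + 1 - 1 - j = s - j := by omega
  have h2 : s - (s - j) = j := by omega
  rw [h1, h2, mul_comm]

end tpart

end MotzkinAux

open MotzkinAux in
/-- Fix `k ≥ 1`. With `m` the Motzkin sequence and `v(n)` the total number
of vertices having exactly `k` vertices in their subtree over all Motzkin trees with `n`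
vertices (defined by `v(0) = 0` and, for `n ≥ 1`,
`v(n) = m(k)·[n = k] + v(n−1) + 2·∑_{i=1}^{n−2} v(i)·m(n−1−i)`), one has
`v(n)/(n·m(n)) → m(k)/3ᵏ` as `n → ∞`. -/
theorem motzkin_prob_k_vertices_in_subtree
    (m : ℕ → ℕ) (hm0 : m 0 = 0) (hm1 : m 1 = 1)
    (hm : ∀ n, 2 ≤ n →
      m n = m (n - 1) + ∑ i ∈ Finset.Icc 1 (n - 2), m i * m (n - 1 - i))
    (k : ℕ) (hk : 1 ≤ k)
    (v : ℕ → ℝ) (hv0 : v 0 = 0)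
    (hv : ∀ n, 1 ≤ n →
      v n = (if n = k then (m k : ℝ) else 0) + v (n - 1)
        + 2 * ∑ i ∈ Finset.Icc 1 (n - 2), v i * (m (n - 1 - i) : ℝ)) :
    Tendsto (fun n : ℕ => v n / (n * (m n : ℝ))) atTop
      (nhds ((m k : ℝ) / 3 ^ k)) := by
  classical
  -- closed form for v
  have hvf : ∀ n : ℕ, v n = if n < k then 0 else (m k : ℝ) * TT m (n - k) := by
    intro n
    induction n using Nat.strong_induction_on with
    | _ n ih =>
      rcases Nat.eq_zero_or_pos n with h0 | h1
      · subst h0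
        have hlt : 0 < k := hk
        simp [hv0, hlt]
      · rw [hv n h1]
        have hsum0 : ∀ (P : Prop), n ≤ k → True := fun _ _ => trivial
        by_cases hnk : n < k
        · have e1 : ¬ (n = k) := by omega
          have e2 : v (n-1) = 0 := by
            rw [ih (n-1) (by omega)]
            have : n - 1 < k := by omega
            simp [this]
          have e3 : ∑ i ∈ Finset.Icc 1 (n - 2), v i * (m (n - 1 - i) : ℝ) = 0 := by
            apply Finset.sum_eq_zero
            intro i hi
            simp only [Finset.mem_Icc] at hi
            have : v i = 0 := by
              rw [ih i (by omega)]
              have : i < k := by omega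
              simp [this]
            rw [this, zero_mul]
          rw [e2, e3]
          simp [e1, hnk]
        · rcases Nat.eq_or_lt_of_le (Nat.le_of_not_lt hnk) with heq | hgt
          · -- n = k
            have e2 : v (n-1) = 0 := by
              rw [ih (n-1) (by omega)]
              have : n - 1 < k := by omega
              simp [this]
            have e3 : ∑ i ∈ Finset.Icc 1 (n - 2), v i * (m (n - 1 - i) : ℝ) = 0 := by
              apply Finset.sum_eq_zero
              intro i hi
              simp only [Finset.mem_Icc] at hi
              have : v i = 0 := by
                rw [ih i (by omega)]
                have : i < k := by omega
                simp [this]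
              rw [this, zero_mul]
            rw [e2, e3]
            have hTT0 : TT m (n - k) = 1 := by
              have : n - k = 0 := by omega
              rw [this]; simp [TT]
            simp [heq.symm, hnk, hTT0, TT]
          · -- n > k
            have e1 : ¬ (n = k) := by omega
            have e2 : v (n-1) = (m k : ℝ) * TT m (n-1-k) := by
              rw [ih (n-1) (by omega)]
              have : ¬ (n - 1 < k) := by omega
              simp [this]
            set s : ℕ := n - 1 - k with hs
            have e3 : ∑ i ∈ Finset.Icc 1 (n - 2), v i * (m (n - 1 - i) : ℝ)
                = (m k : ℝ) * ((s:ℝ) * m s) := by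
              have step1 : ∑ i ∈ Finset.Icc 1 (n - 2), v i * (m (n - 1 - i) : ℝ)
                  = ∑ i ∈ Finset.Icc k (n - 2), (m k : ℝ) * TT m (i-k) * (m (n - 1 - i) : ℝ) := by
                rw [← Finset.sum_subset (Finset.Icc_subset_Icc_left hk)]
                · apply Finset.sum_congr rfl
                  intro i hi
                  simp only [Finset.mem_Icc] at hi
                  rw [ih i (by omega)]
                  have : ¬ (i < k) := by omega
                  simp [this]
                · intro i hi hni
                  simp only [Finset.mem_Icc] at hi hni
                  have : v i = 0 := by
                    rw [ih i (by omega)]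
                    have : i < k := by omega
                    simp [this]
                  rw [this, zero_mul]
              rw [step1]
              have step2 : Finset.Icc k (n-2) = Finset.Ico k (n-1) := by
                rw [← Finset.Ico_add_one_right_eq_Icc]
                congr 1
                omega
              rw [step2, Finset.sum_Ico_eq_sum_range]
              have hsize : n - 1 - k = s := rfl
              rw [hsize]
              have step3 : ∀ j ∈ Finset.range s, (m k : ℝ) * TT m (k+j-k) * (m (n-1-(k+j)) : ℝ)
                  = (m k : ℝ) * (TT m j * (m (s - j) : ℝ)) := by
                intro j hj
                simp only [Finset.mem_range] at hj
                have a1 : k + j - k = j := by omega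
                have a2 : n - 1 - (k+j) = s - j := by omega
                rw [a1, a2]
                ring
              rw [Finset.sum_congr rfl step3, ← Finset.mul_sum]
              congr 1
              have hlast : ∑ j ∈ Finset.range (s+1), TT m j * (m (s-j) : ℝ)
                  = ∑ j ∈ Finset.range s, TT m j * (m (s-j) : ℝ) := by
                rw [Finset.sum_range_succ]
                simp [hm0]
              rw [← hlast, hA' hm0 hm s]
            rw [e2, e3]
            have e4 : n - k = s + 1 := by omega
            rw [e4, TT_succ]
            have e5 : ¬ (n < k) := hnk
            simp only [e1, if_false, e5]
            ring
  have hnum := shift_tendsto hm0 hm1 hm k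
  have hden : Tendsto (fun n : ℕ => 2 / (TT m (n+1) / TT m n - 1)) atTop (nhds 1) := by
    have h1 := (ratio_tendsto hm0 hm1 hm).sub (tendsto_const_nhds (x := (1:ℝ)))
    have h2 := Tendsto.div (tendsto_const_nhds (x := (2:ℝ))) h1 (by norm_num)
    norm_num at h2
    exact h2
  have hmain := ((tendsto_const_nhds (x := (m k : ℝ))).mul hnum).mul hden
  have hlimeq : (m k : ℝ) * (1/3)^k * 1 = (m k : ℝ) / 3^k := by
    rw [mul_one, one_div, inv_pow, div_eq_mul_inv]
  rw [hlimeq] at hmain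
  apply hmain.congr'
  filter_upwards [eventually_ge_atTop (k+1)] with n hn
  have hvn : v n = (m k : ℝ) * TT m (n - k) := by
    rw [hvf n]
    have : ¬ (n < k) := by omega
    simp [this]
  have hnm : (n:ℝ) * m n = (TT m (n+1) - TT m n)/2 := by
    rw [TT_succ]; ring
  have hTn := TT_pos' (m := m) n
  have hTgt : TT m n < TT m (n+1) := by
    rw [TT_succ]
    have h1 : (1:ℝ) ≤ m n := by exact_mod_cast m_pos hm1 hm n (by omega)
    have h2 : (1:ℝ) ≤ (n:ℝ) := by exact_mod_cast (by omega : 1 ≤ n)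
    nlinarith
  have ha : TT m n ≠ 0 := ne_of_gt hTn
  have hc : TT m (n+1) - TT m n ≠ 0 := ne_of_gt (by linarith)
  have hb : TT m (n+1) / TT m n - 1 ≠ 0 := by
    rw [div_sub_one ha]
    exact div_ne_zero hc ha
  rw [hvn, hnm]
  field_simp
end

section
/- Let x, y be real numbers with 0 < x < 1, 0 < y ≤ 1, and 4x²y < (1 − x)². Then ∑_{k=1}^∞ catalan(k−1)·x^{2k−1}·yᵏ/(1 − x)^{2k−1} converges and equals ((1 − x) − √((1 − x)² − 4x²y))/(2x). (Equivalently, the generating function R′_k(x) for the number of Motzkin trees with k leaves, counted by vertices, is catalan(k−1)·x^{2k−1}/(1 − x)^{2k−1}.) -/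
open Finset

lemma reindex_key (g : ℕ → ℝ) (hg : ∀ i, 0 ≤ g i) (n : ℕ) :
    ∑ j ∈ range n, ∑ i ∈ range (j + 1), g i * g (j - i) ≤ (∑ i ∈ range n, g i) ^ 2 := by
  have h1 : ∑ j ∈ range n, ∑ i ∈ range (j + 1), g i * g (j - i)
      = ∑ i ∈ range n, ∑ k ∈ range (n - i), g i * g k := by
    rw [Finset.sum_sigma', Finset.sum_sigma']
    refine Finset.sum_nbij' (fun p => ⟨p.2, p.1 - p.2⟩) (fun p => ⟨p.1 + p.2, p.1⟩) ?_ ?_ ?_ ?_ ?_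
    · rintro ⟨j, i⟩ hp
      simp only [Finset.mem_sigma, Finset.mem_range] at hp ⊢
      omega
    · rintro ⟨i, k⟩ hp
      simp only [Finset.mem_sigma, Finset.mem_range] at hp ⊢
      omega
    · rintro ⟨j, i⟩ hp
      simp only [Finset.mem_sigma, Finset.mem_range] at hp
      exact Sigma.ext (show i + (j - i) = j by omega) (by simp)
    · rintro ⟨i, k⟩ hp
      simp only [Finset.mem_sigma, Finset.mem_range] at hp
      exact Sigma.ext rfl (by simp)
    · rintro ⟨j, i⟩ hp
      rfl
  rw [h1, sq, Finset.sum_mul_sum]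
  refine Finset.sum_le_sum fun i _ => ?_
  refine Finset.sum_le_sum_of_subset_of_nonneg ?_ fun k _ _ => mul_nonneg (hg i) (hg k)
  exact Finset.range_subset_range.2 (Nat.sub_le n i)

lemma catalan_hasSum (t : ℝ) (ht : 0 < t) (ht4 : 4 * t < 1) :
    HasSum (fun j : ℕ => (catalan j : ℝ) * t ^ j)
      ((1 - Real.sqrt (1 - 4 * t)) / (2 * t)) := by
  have ht0 : (0:ℝ) ≤ 1 - 4 * t := by linarith
  set u := Real.sqrt (1 - 4 * t) with hu
  have hu2 : u ^ 2 = 1 - 4 * t := Real.sq_sqrt ht0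
  have hu0 : 0 ≤ u := Real.sqrt_nonneg _
  have hu1 : u < 1 := by nlinarith
  set m := (1 - u) / (2 * t) with hm
  have htne : t ≠ 0 := ne_of_gt ht
  have hmeq : m = 1 + t * m ^ 2 := by
    have h2t : 2 * t ≠ 0 := by positivity
    have hmt : m * (2 * t) = 1 - u := by rw [hm]; exact div_mul_cancel₀ _ h2t
    have key : t * (t * m ^ 2 - m + 1) = 0 := by
      linear_combination (1/4) * (m * 2 * t + 1 - u) * hmt + (1/4) * hu2 - (1/2) * hmt
    have := (mul_eq_zero.1 key).resolve_left htne
    linarith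
  have hm1 : 1 ≤ m := by nlinarith [mul_pos ht (mul_pos (sub_pos.2 hu1) (div_pos (sub_pos.2 hu1) (by linarith : (0:ℝ) < 2*t)))]
  set g : ℕ → ℝ := fun j => (catalan j : ℝ) * t ^ j with hg
  have hgnn : ∀ j, 0 ≤ g j := fun j =>
    mul_nonneg (Nat.cast_nonneg _) (pow_nonneg ht.le _)
  -- the recurrence at the level of g
  have hgrec : ∀ j : ℕ, g (j + 1) = t * ∑ i ∈ Finset.range (j + 1), g i * g (j - i) := by
    intro j
    rw [hg]
    simp only
    rw [catalan_succ' j, Finset.Nat.sum_antidiagonal_eq_sum_range_succ_mk]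
    push_cast
    rw [Finset.sum_mul, Finset.mul_sum]
    refine Finset.sum_congr rfl fun i hi => ?_
    have hij : i ≤ j := Nat.lt_succ_iff.1 (Finset.mem_range.1 hi)
    have : t ^ i * t ^ (j - i) = t ^ j := by
      rw [← pow_add, Nat.add_sub_cancel' hij]
    calc (catalan i : ℝ) * (catalan (j - i) : ℝ) * t ^ (j + 1)
        = t * ((catalan i : ℝ) * (catalan (j-i) : ℝ) * (t ^ i * t ^ (j - i))) := by
          rw [this]; ring
      _ = t * ((catalan i : ℝ) * t ^ i * ((catalan (j - i) : ℝ) * t ^ (j - i))) := by ring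
  -- partial sums bounded by m
  have hbound : ∀ n, ∑ j ∈ Finset.range n, g j ≤ m := by
    intro n
    induction n with
    | zero => simpa using le_trans zero_le_one hm1
    | succ n ih =>
      rw [Finset.sum_range_succ']
      have hg0 : g 0 = 1 := by simp [hg]
      have : ∑ j ∈ Finset.range n, g (j + 1)
          = t * ∑ j ∈ Finset.range n, ∑ i ∈ Finset.range (j + 1), g i * g (j - i) := by
        rw [Finset.mul_sum]; exact Finset.sum_congr rfl fun j _ => hgrec j
      rw [this, hg0]
      have h1 : ∑ j ∈ Finset.range n, ∑ i ∈ Finset.range (j + 1), g i * g (j - i)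
          ≤ (∑ j ∈ Finset.range n, g j) ^ 2 := reindex_key g hgnn n
      have h2 : (∑ j ∈ Finset.range n, g j) ^ 2 ≤ m ^ 2 := by
        have hnn : 0 ≤ ∑ j ∈ Finset.range n, g j := Finset.sum_nonneg fun j _ => hgnn j
        exact pow_le_pow_left₀ hnn ih 2
      nlinarith
  have hsum : Summable g := summable_of_sum_range_le hgnn hbound
  set L := ∑' j, g j with hL
  have hLle : L ≤ m := Summable.tsum_le_of_sum_range_le hsum hbound
  -- Cauchy product
  have hnorm : Summable fun j => ‖g j‖ := by
    refine hsum.congr fun j => ?_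
    rw [Real.norm_eq_abs, abs_of_nonneg (hgnn j)]
  have hcauchy : L * L = ∑' n, ∑ kl ∈ Finset.HasAntidiagonal.antidiagonal n, g kl.1 * g kl.2 :=
    tsum_mul_tsum_eq_tsum_sum_antidiagonal_of_summable_norm hnorm hnorm
  have hanti : ∀ n : ℕ, ∑ kl ∈ Finset.HasAntidiagonal.antidiagonal n, g kl.1 * g kl.2 = g (n + 1) / t := by
    intro n
    rw [hgrec n, Finset.Nat.sum_antidiagonal_eq_sum_range_succ_mk]
    field_simp
  have hshift : L = 1 + ∑' n, g (n + 1) := by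
    rw [hL, Summable.tsum_eq_zero_add hsum]
    simp [hg]
  have hsumsucc : Summable fun n => g (n + 1) := by
    exact (summable_nat_add_iff 1).2 hsum
  have hLeq : L = 1 + t * L ^ 2 := by
    have h1 : L * L = ∑' n, g (n + 1) / t := by
      rw [hcauchy]; exact tsum_congr hanti
    have h2 : ∑' n, g (n + 1) / t = (∑' n, g (n + 1)) / t := by
      rw [tsum_div_const]
    have : t * (L * L) = ∑' n, g (n + 1) := by
      rw [h1, h2]; field_simp
    calc L = 1 + ∑' n, g (n + 1) := hshift
      _ = 1 + t * (L * L) := by rw [this]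
      _ = 1 + t * L ^ 2 := by ring
  -- solve the quadratic
  have hM : m < (1 + u) / (2 * t) := by
    have hupos : 0 < u := Real.sqrt_pos.2 (by linarith)
    rw [hm, div_lt_div_iff₀ (by linarith) (by linarith)]
    nlinarith
  have hfac : (L - m) * (L - (1 + u) / (2 * t)) = 0 := by
    have expand : t * ((L - m) * (L - (1 + u) / (2 * t))) = t * L ^ 2 - L + 1 := by
      have hmt' : m * (2 * t) = 1 - u := by rw [hm]; exact div_mul_cancel₀ _ (by positivity)
      have hm2 : m * (1 + u) = 2 := by
        rw [hm, div_mul_eq_mul_div, div_eq_iff (by positivity)]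
        linear_combination (-1) * hu2
      field_simp [hm]
      linear_combination (-L) * hmt' + hm2
    have : t * ((L - m) * (L - (1 + u) / (2 * t))) = 0 := by
      rw [expand]; linarith [hLeq]
    exact (mul_eq_zero.1 this).resolve_left htne
  have hLm : L = m := by
    rcases mul_eq_zero.1 hfac with h | h
    · linarith
    · exfalso; have : L = (1 + u) / (2 * t) := by linarith
      linarith
  have := hsum.hasSum
  rw [← hL, hLm, hm] at this
  exact this


/-- For real `x, y` with `0 < x < 1`, `0 < y ≤ 1`, and `4x²y < (1 − x)²`,
the series `∑_{k≥1} catalan(k−1)·x^{2k−1}·yᵏ/(1 − x)^{2k−1}` (indexed below by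
`j = k − 1`) converges to `((1 − x) − √((1 − x)² − 4x²y))/(2x)`. -/
theorem motzkin_leaves_gf_sum
    (x y : ℝ) (hx : 0 < x) (hx1 : x < 1) (hy : 0 < y) (hy1 : y ≤ 1)
    (hdisc : 4 * x ^ 2 * y < (1 - x) ^ 2) :
    HasSum
      (fun j : ℕ =>
        (catalan j : ℝ) * x ^ (2 * j + 1) * y ^ (j + 1) / (1 - x) ^ (2 * j + 1))
      (((1 - x) - Real.sqrt ((1 - x) ^ 2 - 4 * x ^ 2 * y)) / (2 * x)) := by
  have h1x : (0:ℝ) < 1 - x := by linarith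
  have h1xne : (1:ℝ) - x ≠ 0 := ne_of_gt h1x
  set t := x ^ 2 * y / (1 - x) ^ 2 with htdef
  have ht : 0 < t := by positivity
  have ht4 : 4 * t < 1 := by
    have : 4 * t * (1 - x) ^ 2 = 4 * x ^ 2 * y := by
      rw [htdef]; field_simp
    nlinarith
  have hD : (0:ℝ) ≤ (1 - x) ^ 2 - 4 * x ^ 2 * y := by nlinarith
  have hsqrt : Real.sqrt (1 - 4 * t) = Real.sqrt ((1 - x) ^ 2 - 4 * x ^ 2 * y) / (1 - x) := by
    have : 1 - 4 * t = ((1 - x) ^ 2 - 4 * x ^ 2 * y) / (1 - x) ^ 2 := by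
      have ht_eq : t * (1 - x) ^ 2 = x ^ 2 * y := by
        rw [htdef]; exact div_mul_cancel₀ _ (pow_ne_zero 2 h1xne)
      rw [eq_div_iff (pow_ne_zero 2 h1xne)]
      linear_combination (-4) * ht_eq
    rw [this, Real.sqrt_div hD, Real.sqrt_sq h1x.le]
  have hmain := (catalan_hasSum t ht ht4).mul_left (x * y / (1 - x))
  have hfun : (fun j : ℕ => x * y / (1 - x) * ((catalan j : ℝ) * t ^ j))
      = fun j : ℕ =>
        (catalan j : ℝ) * x ^ (2 * j + 1) * y ^ (j + 1) / (1 - x) ^ (2 * j + 1) := by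
    funext j
    rw [htdef, div_pow, mul_pow, ← pow_mul, ← pow_mul]
    field_simp
    ring
  have hval : x * y / (1 - x) * ((1 - Real.sqrt (1 - 4 * t)) / (2 * t))
      = ((1 - x) - Real.sqrt ((1 - x) ^ 2 - 4 * x ^ 2 * y)) / (2 * x) := by
    rw [hsqrt, htdef]
    field_simp
  rwa [hfun, hval] at hmain
end

section
/- For every real number x with 0 < x ≤ 1/4, the series ∑_{n=1}^∞ catalan(n−1)·xⁿ converges and ∑_{n=1}^∞ catalan(n−1)·xⁿ = (1 − √(1 − 4x))/2. -/
lemma cb_sq (n : ℕ) : (Nat.centralBinom n : ℝ)^2 * (2*n+1) ≤ 16^n := by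
  induction n with
  | zero => simp [Nat.centralBinom]
  | succ n ih =>
    set c : ℝ := (Nat.centralBinom n : ℝ) with hc
    set c' : ℝ := (Nat.centralBinom (n+1) : ℝ) with hc'
    have key : ((n:ℝ)+1) * c' = 2*(2*n+1) * c := by
      rw [hc, hc']
      exact_mod_cast congrArg (Nat.cast : ℕ → ℝ) (Nat.succ_mul_centralBinom_succ n)
    have step1 : c'^2*(2*(n:ℝ)+3)*((n:ℝ)+1)^2 = 4*(2*(n:ℝ)+1)*(2*(n:ℝ)+3)*(c^2*(2*(n:ℝ)+1)) := by
      linear_combination (2*(n:ℝ)+3)*(((n:ℝ)+1)*c' + 2*(2*(n:ℝ)+1)*c) * key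
    have step2 : 4*(2*(n:ℝ)+1)*(2*(n:ℝ)+3)*(c^2*(2*(n:ℝ)+1)) ≤ 4*(2*(n:ℝ)+1)*(2*(n:ℝ)+3)*16^n :=
      mul_le_mul_of_nonneg_left ih (by positivity)
    have step3 : 4*(2*(n:ℝ)+1)*(2*(n:ℝ)+3)*(16:ℝ)^n ≤ 16^(n+1)*((n:ℝ)+1)^2 := by
      have h16 : (0:ℝ) ≤ 16^n := by positivity
      have : (16:ℝ)^(n+1) = 16 * 16^n := by ring
      nlinarith [h16]
    have hpos : (0:ℝ) < ((n:ℝ)+1)^2 := by positivity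
    have : c'^2*(2*(n:ℝ)+3)*((n:ℝ)+1)^2 ≤ 16^(n+1)*((n:ℝ)+1)^2 := by
      rw [step1]; exact step2.trans step3
    have := le_of_mul_le_mul_right this hpos
    push_cast
    linarith [this]

lemma cb_le (n : ℕ) : (Nat.centralBinom n : ℝ) * Real.sqrt (2*n+1) ≤ 4^n := by
  have h := Real.sqrt_le_sqrt (cb_sq n)
  rw [Real.sqrt_mul (sq_nonneg _), Real.sqrt_sq (by positivity)] at h
  have h16 : (16:ℝ)^n = ((4:ℝ)^n)^2 := by rw [← pow_mul, pow_mul']; norm_num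
  rwa [h16, Real.sqrt_sq (by positivity)] at h

lemma cat_term_le (n : ℕ) :
    (catalan n : ℝ) * (1/4)^(n+1) ≤ 1/(((n:ℝ)+1) * Real.sqrt ((n:ℝ)+1)) := by
  have hpos : (0:ℝ) < ((n:ℝ)+1) * Real.sqrt ((n:ℝ)+1) := by positivity
  rw [le_div_iff₀ hpos]
  have hcat : ((n:ℝ)+1) * (catalan n : ℝ) = (Nat.centralBinom n : ℝ) := by
    exact_mod_cast congrArg (Nat.cast : ℕ → ℝ) (succ_mul_catalan_eq_centralBinom n)
  have hs1 : Real.sqrt ((n:ℝ)+1) ≤ Real.sqrt (2*n+1) := Real.sqrt_le_sqrt (by push_cast; linarith)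
  have key : (catalan n : ℝ) * (((n:ℝ)+1) * Real.sqrt ((n:ℝ)+1)) ≤ 4^n := by
    calc (catalan n : ℝ) * (((n:ℝ)+1) * Real.sqrt ((n:ℝ)+1))
        = (Nat.centralBinom n : ℝ) * Real.sqrt ((n:ℝ)+1) := by rw [← hcat]; ring
      _ ≤ (Nat.centralBinom n : ℝ) * Real.sqrt (2*n+1) :=
          mul_le_mul_of_nonneg_left hs1 (by positivity)
      _ ≤ 4^n := cb_le n
  have h4 : ((1:ℝ)/4)^(n+1) * (4:ℝ)^n = 1/4 := by
    rw [one_div, inv_pow, pow_succ]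
    field_simp
  calc (catalan n : ℝ) * (1/4)^(n+1) * (((n:ℝ)+1) * Real.sqrt ((n:ℝ)+1))
      = (catalan n : ℝ) * (((n:ℝ)+1) * Real.sqrt ((n:ℝ)+1)) * (1/4)^(n+1) := by ring
    _ ≤ (4:ℝ)^n * (1/4)^(n+1) := mul_le_mul_of_nonneg_right key (by positivity)
    _ = 1/4 := by rw [mul_comm]; exact h4
    _ ≤ 1 := by norm_num

lemma cat_summable {x : ℝ} (hx : 0 ≤ x) (hx' : x ≤ 1/4) :
    Summable (fun n : ℕ => (catalan n : ℝ) * x ^ (n+1)) := by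
  have hbig : Summable (fun n : ℕ => 1/(((n:ℝ)+1) * Real.sqrt ((n:ℝ)+1))) := by
    have h1 : Summable (fun n : ℕ => 1/(n:ℝ)^(3/2:ℝ)) :=
      Real.summable_one_div_nat_rpow.2 (by norm_num)
    have h2 := (summable_nat_add_iff 1).2 h1
    apply h2.congr
    intro n
    have hpos : (0:ℝ) < (n:ℝ)+1 := by positivity
    have : (((n+1:ℕ)):ℝ)^(3/2:ℝ) = ((n:ℝ)+1) * Real.sqrt ((n:ℝ)+1) := by
      push_cast
      rw [show (3/2:ℝ) = 1 + 1/2 by norm_num, Real.rpow_add hpos, Real.rpow_one,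
        Real.sqrt_eq_rpow]
    rw [← this]
  apply Summable.of_nonneg_of_le (fun n => by positivity) (fun n => ?_) hbig
  calc (catalan n : ℝ) * x ^ (n+1) ≤ (catalan n : ℝ) * (1/4)^(n+1) :=
        mul_le_mul_of_nonneg_left (pow_le_pow_left₀ hx hx' _) (by positivity)
    _ ≤ _ := cat_term_le n

lemma cat_tsum_quad {x : ℝ} (hx : 0 ≤ x) (hx' : x ≤ 1/4) :
    (∑' n : ℕ, (catalan n : ℝ) * x ^ (n+1)) * (∑' n : ℕ, (catalan n : ℝ) * x ^ (n+1)) + x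
      = ∑' n : ℕ, (catalan n : ℝ) * x ^ (n+1) := by
  set f : ℕ → ℝ := fun n => (catalan n : ℝ) * x ^ (n+1) with hf
  have hsum : Summable f := cat_summable hx hx'
  have hnorm : Summable (fun n => ‖f n‖) := by
    apply hsum.congr
    intro n
    exact (Real.norm_of_nonneg (by positivity)).symm
  have hmul := tsum_mul_tsum_eq_tsum_sum_antidiagonal_of_summable_norm hnorm hnorm
  have hinner : ∀ n : ℕ, (∑ kl ∈ Finset.HasAntidiagonal.antidiagonal n, f kl.1 * f kl.2)
      = (catalan (n+1) : ℝ) * x ^ (n+2) := by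
    intro n
    have : ∀ kl ∈ Finset.HasAntidiagonal.antidiagonal n,
        f kl.1 * f kl.2 = ((catalan kl.1 : ℝ) * (catalan kl.2 : ℝ)) * x ^ (n+2) := by
      intro kl hkl
      have h := Finset.HasAntidiagonal.mem_antidiagonal.mp hkl
      rw [hf]
      simp only
      rw [← h]
      ring
    rw [Finset.sum_congr rfl this, ← Finset.sum_mul, catalan_succ' n]
    push_cast
    ring
  rw [hmul, tsum_congr hinner]
  have hshift := Summable.tsum_eq_zero_add hsum
  have hf0 : f 0 = x := by simp [hf]
  have : (fun n : ℕ => f (n+1)) = fun n : ℕ => (catalan (n+1) : ℝ) * x ^ (n+2) := rfl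
  rw [hf0, this] at hshift
  linarith [hshift]

lemma cat_tsum_quarter :
    (∑' n : ℕ, (catalan n : ℝ) * (1/4:ℝ) ^ (n+1)) = 1/2 := by
  have h := cat_tsum_quad (x := (1/4:ℝ)) (by norm_num) le_rfl
  set S := ∑' n : ℕ, (catalan n : ℝ) * (1/4:ℝ) ^ (n+1)
  have hsq : (S - 1/2)^2 = 0 := by linear_combination h
  have := pow_eq_zero_iff (n := 2) (by norm_num) |>.mp hsq
  linarith


/-- For every real `x` with `0 < x ≤ 1/4`, the series
`∑_{n≥1} catalan(n−1)·xⁿ` (indexed below by `n` with the term `catalan(n)·x^{n+1}`)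
converges to `(1 − √(1 − 4x))/2`. -/
theorem ordered_trees_generating_function_value
    (x : ℝ) (hx : 0 < x) (hx' : x ≤ 1 / 4) :
    HasSum (fun n : ℕ => (catalan n : ℝ) * x ^ (n + 1))
      ((1 - Real.sqrt (1 - 4 * x)) / 2) := by
  have hx0 : (0:ℝ) ≤ x := hx.le
  have hsum := cat_summable hx0 hx'
  set S := ∑' n : ℕ, (catalan n : ℝ) * x ^ (n+1) with hS
  have hquad := cat_tsum_quad hx0 hx'
  have hShalf : S ≤ 1/2 := by
    rcases eq_or_lt_of_le hx' with h | h
    · rw [hS, h, cat_tsum_quarter]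
    · have hg : Summable (fun n : ℕ => (catalan n : ℝ) * (1/4:ℝ) ^ (n+1)) :=
        cat_summable (x := (1/4:ℝ)) (by norm_num) le_rfl
      have hle : ∀ n : ℕ, (catalan n : ℝ) * x ^ (n+1) ≤ (catalan n : ℝ) * (1/4:ℝ) ^ (n+1) :=
        fun n => mul_le_mul_of_nonneg_left (pow_le_pow_left₀ hx0 hx' _) (by positivity)
      have h0 : ∀ n : ℕ, (0:ℝ) ≤ (catalan n : ℝ) * x ^ (n+1) := fun n => by positivity
      have hi : (catalan 0 : ℝ) * x ^ (0+1) < (catalan 0 : ℝ) * (1/4:ℝ) ^ (0+1) := by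
        simpa using h
      have hlt := Summable.tsum_lt_tsum_of_nonneg h0 hle hi hg
      rw [cat_tsum_quarter] at hlt
      exact hlt.le
  have hsq : (1 - 2*S)^2 = 1 - 4*x := by linear_combination 4 * hquad
  have hsqrt : Real.sqrt (1 - 4*x) = 1 - 2*S := by
    rw [← hsq, Real.sqrt_sq (by linarith)]
  have hval : (1 - Real.sqrt (1 - 4*x)) / 2 = S := by rw [hsqrt]; ring
  rw [hval]
  exact hsum.hasSum
end

section
/- Let T ∈ ℝ⟦X⟧ be the unique formal power series with constant term 0 satisfying T² − T + X = 0 (so T = ∑_{n≥1} catalan(n−1)Xⁿ). For all formal power series R, L ∈ ℝ⟦X⟧ satisfying L·(1 − T)² = R·(1 − T)² + X·L, one has (1 − 4X)·(2L − R)² = R². (Equivalently, L = R·(1/2)·(1 + 1/√(1 − 4x)): the generating function for the number of vertices over all ordered trees whose subtree has a given property equals R times (1 + (1−4x)^{−1/2})/2, where R is the generating function for the number of ordered trees whose root has that property.) -/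
/-- Let `T ∈ ℝ⟦X⟧` be the unique formal power series with constant term 0
satisfying `T² − T + X = 0` (so `T = ∑_{n≥1} catalan(n−1)Xⁿ`). For all formal power
series `R, L` satisfying `L·(1 − T)² = R·(1 − T)² + X·L`, one has
`(1 − 4X)·(2L − R)² = R²` (i.e. `L = R·(1 + 1/√(1 − 4X))/2`). -/
theorem ordered_trees_subtree_gf_relation
    (T : PowerSeries ℝ) (hT0 : PowerSeries.constantCoeff T = 0)
    (hT : T ^ 2 - T + PowerSeries.X = 0)
    (R L : PowerSeries ℝ)
    (hL : L * (1 - T) ^ 2 = R * (1 - T) ^ 2 + PowerSeries.X * L) :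
    (1 - 4 * PowerSeries.X) * (2 * L - R) ^ 2 = R ^ 2 := by
  have hne : (1 - T : PowerSeries ℝ) ≠ 0 := by
    intro h
    have := congrArg (PowerSeries.constantCoeff) h
    simp [hT0] at this
  have key : (1 - T) * ((1 - 2 * T) * (2 * L - R) - R) = 0 := by
    linear_combination 2 * hL + 2 * L * hT
  have h2 : (1 - 2 * T) * (2 * L - R) = R := by
    rcases mul_eq_zero.mp key with h | h
    · exact absurd h hne
    · exact sub_eq_zero.mp h
  have hX : (1 - 4 * PowerSeries.X : PowerSeries ℝ) = (1 - 2 * T) ^ 2 := by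
    linear_combination (-4 : PowerSeries ℝ) * hT
  calc (1 - 4 * PowerSeries.X) * (2 * L - R) ^ 2
      = ((1 - 2 * T) * (2 * L - R)) ^ 2 := by rw [hX]; ring
    _ = R ^ 2 := by rw [h2]
end

section
/- Fix an integer k ≥ 1. Define l : ℕ → ℝ by l(0) = 0 and, for n ≥ 1, l(n) = catalan(k−1)·[n = k] + ∑_{i=1}^{n−1} l(i)·catalan(n−i), so that l(n) is the total number of vertices having exactly k vertices in their subtree, summed over all ordered trees with n vertices. Then l(n)/(n·catalan(n−1)) → catalan(k−1)/2^{2k−1} as n → ∞; that is, the probability that a uniformly random vertex of a uniformly random ordered tree with n vertices has exactly k vertices in its subtree tends to catalan(k−1)/2^{2k−1}. -/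
open Filter

open Nat Finset

lemma Bsucc (m : ℕ) : (centralBinom (m+1) : ℝ) = 4 * centralBinom m - 2 * catalan m := by
  have h1 : ((m:ℝ)+1) * centralBinom (m+1) = 2*(2*m+1) * centralBinom m := by
    exact_mod_cast Nat.succ_mul_centralBinom_succ m
  have h2 : ((m:ℝ)+1) * catalan m = centralBinom m := by
    exact_mod_cast succ_mul_catalan_eq_centralBinom m
  have hm : ((m:ℝ)+1) ≠ 0 := by positivity
  have : ((m:ℝ)+1) * centralBinom (m+1) = ((m:ℝ)+1) * (4 * centralBinom m - 2 * catalan m) := by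
    rw [h1]; nlinarith [h2]
  exact mul_left_cancel₀ hm this

lemma Ssum (m : ℕ) : ∑ j ∈ Finset.range (m+1), (centralBinom j : ℝ) * catalan (m - j)
    = centralBinom (m+1) / 2 := by
  induction m with
  | zero => simp [centralBinom]
  | succ m ih =>
    have hsplit : ∑ j ∈ Finset.range (m+2), (centralBinom j : ℝ) * catalan (m+1 - j)
        = (catalan (m+1) : ℝ) + ∑ j ∈ Finset.range (m+1), (centralBinom (j+1) : ℝ) * catalan (m - j) := by
      rw [Finset.sum_range_succ' (fun j => (centralBinom j : ℝ) * catalan (m+1 - j)) (m+1)]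
      simp [centralBinom, add_comm]
    rw [hsplit]
    have hcat : (catalan (m+1) : ℝ) = ∑ j ∈ Finset.range (m+1), (catalan j : ℝ) * catalan (m - j) := by
      rw [catalan_succ' m]
      rw [Nat.sum_antidiagonal_eq_sum_range_succ (fun x y => catalan x * catalan y) m]
      push_cast
      rfl
    have : ∑ j ∈ Finset.range (m+1), (centralBinom (j+1) : ℝ) * catalan (m - j)
        = 4 * (∑ j ∈ Finset.range (m+1), (centralBinom j : ℝ) * catalan (m - j))
          - 2 * ∑ j ∈ Finset.range (m+1), (catalan j : ℝ) * catalan (m - j) := by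
      rw [Finset.mul_sum, Finset.mul_sum, ← Finset.sum_sub_distrib]
      refine Finset.sum_congr rfl fun j _ => ?_
      rw [Bsucc]; ring
    rw [this, ih, ← hcat, Bsucc (m+1)]
    ring

noncomputable def gfun (k n : ℕ) : ℝ :=
  if n < k then 0 else if n = k then (catalan (k-1) : ℝ)
  else (catalan (k-1) : ℝ) / 2 * centralBinom (n - k)

lemma closed_form (k : ℕ) (hk : 1 ≤ k) (l : ℕ → ℝ) (hl0 : l 0 = 0)
    (hl : ∀ n, 1 ≤ n →
      l n = (if n = k then (catalan (k - 1) : ℝ) else 0)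
        + ∑ i ∈ Finset.Icc 1 (n - 1), l i * (catalan (n - i) : ℝ)) :
    ∀ n, l n = gfun k n := by
  intro n
  induction n using Nat.strong_induction_on with
  | _ n ih =>
  rcases Nat.eq_zero_or_pos n with rfl | hn
  · rw [gfun, if_pos (show (0:ℕ) < k from hk)]; exact hl0
  rw [hl n hn]
  have hsum : ∑ i ∈ Finset.Icc 1 (n - 1), l i * (catalan (n - i) : ℝ)
      = ∑ i ∈ Finset.Icc 1 (n - 1), gfun k i * (catalan (n - i) : ℝ) := by
    refine Finset.sum_congr rfl fun i hi => ?_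
    rw [ih i (by have := (Finset.mem_Icc.mp hi).2; omega)]
  rw [hsum]
  rcases lt_trichotomy n k with h | heq | h
  · -- n < k
    rw [if_neg (by omega)]
    have hz : ∀ i ∈ Finset.Icc 1 (n - 1), gfun k i * (catalan (n - i) : ℝ) = 0 := by
      intro i hi
      have hik : i < k := by have := (Finset.mem_Icc.mp hi).2; omega
      rw [gfun, if_pos hik, zero_mul]
    rw [Finset.sum_eq_zero hz, gfun, if_pos h]
    ring
  · -- n = k
    subst heq
    rw [if_pos rfl]
    have hz : ∀ i ∈ Finset.Icc 1 (n - 1), gfun n i * (catalan (n - i) : ℝ) = 0 := by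
      intro i hi
      have hik : i < n := by have := (Finset.mem_Icc.mp hi).2; omega
      rw [gfun, if_pos hik, zero_mul]
    rw [Finset.sum_eq_zero hz, gfun, if_neg (by omega), if_pos rfl]
    ring
  · -- n > k
    obtain ⟨p, rfl⟩ : ∃ p, n = k + (p + 1) := ⟨n - k - 1, by omega⟩
    rw [if_neg (by omega)]
    set c : ℝ := (catalan (k-1) : ℝ) with hc
    have hstep1 : ∑ i ∈ Finset.Icc 1 (k + (p+1) - 1), gfun k i * (catalan (k + (p+1) - i) : ℝ)
        = ∑ i ∈ Finset.Icc k (k + (p+1) - 1), gfun k i * (catalan (k + (p+1) - i) : ℝ) := by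
      refine (Finset.sum_subset ?_ ?_).symm
      · intro i hi; simp only [Finset.mem_Icc] at *; omega
      · intro i hi hni
        have hik : i < k := by simp only [Finset.mem_Icc] at *; omega
        rw [gfun, if_pos hik, zero_mul]
    have hIco : Finset.Icc k (k + (p+1) - 1) = Finset.Ico k (k + (p+1)) := by
      rw [← Finset.Ico_add_one_right_eq_Icc]; congr 1; try omega
    rw [hstep1, hIco, Finset.sum_Ico_eq_sum_range,
      show k + (p+1) - k = p + 1 from by omega]
    rw [Finset.sum_range_succ' (fun j => gfun k (k + j) * (catalan (k + (p+1) - (k + j)) : ℝ)) p]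
    have h0 : gfun k (k + 0) * (catalan (k + (p+1) - (k+0)) : ℝ) = c * catalan (p+1) := by
      rw [show k + 0 = k from rfl, show k + (p+1) - k = p + 1 from by omega,
        gfun, if_neg (by omega), if_pos rfl]
    rw [h0]
    have hterm : ∀ j, gfun k (k + (j+1)) * (catalan (k + (p+1) - (k + (j+1))) : ℝ)
        = c / 2 * centralBinom (j+1) * catalan (p - j) := by
      intro j
      rw [show k + (p+1) - (k + (j+1)) = p - j from by omega, gfun,
        if_neg (by omega), if_neg (by omega), show k + (j+1) - k = j + 1 from by omega]
    simp only [hterm]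
    have hS := Ssum (p+1)
    rw [Finset.sum_range_succ' (fun j => (centralBinom j : ℝ) * catalan (p + 1 - j)) (p+1)] at hS
    rw [Finset.sum_range_succ (fun j => (centralBinom (j+1) : ℝ) * catalan (p + 1 - (j+1))) p] at hS
    simp only [Nat.add_sub_cancel, Nat.sub_self, centralBinom_zero, Nat.cast_one, one_mul,
      Nat.sub_zero, catalan_zero, mul_one] at hS
    have hsimp : ∀ j, p + 1 - (j + 1) = p - j := fun j => by omega
    simp only [hsimp] at hS
    have hsum2 : ∑ j ∈ Finset.range p, c / 2 * (centralBinom (j+1) : ℝ) * catalan (p - j)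
        = c / 2 * ∑ j ∈ Finset.range p, (centralBinom (j+1) : ℝ) * catalan (p - j) := by
      rw [Finset.mul_sum]; exact Finset.sum_congr rfl fun j _ => by ring
    rw [hsum2]
    rw [gfun, if_neg (by omega), if_neg (by omega),
      show k + (p+1) - k = p + 1 from by omega]
    have hB2 : (centralBinom (p+1+1) : ℝ) = 4 * centralBinom (p+1) - 2 * catalan (p+1) :=
      Bsucc (p+1)
    have hkey : ∑ j ∈ Finset.range p, (centralBinom (j+1) : ℝ) * catalan (p - j)
        = 2 * centralBinom (p+1) - catalan (p+1) - centralBinom (p+1) - catalan (p+1) := by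
      rw [hB2] at hS; linarith
    rw [hkey]
    ring

lemma Bratio_tendsto :
    Tendsto (fun t : ℕ => (centralBinom t : ℝ) / centralBinom (t+1)) atTop (nhds (1/4)) := by
  have heq : ∀ t : ℕ, (centralBinom t : ℝ) / centralBinom (t+1) = ((t:ℝ)+1) / (2*(2*t+1)) := by
    intro t
    have h1 : ((t:ℝ)+1) * centralBinom (t+1) = 2*(2*t+1) * centralBinom t := by
      exact_mod_cast Nat.succ_mul_centralBinom_succ t
    have hB1 : (centralBinom (t+1) : ℝ) ≠ 0 := Nat.cast_ne_zero.mpr (centralBinom_ne_zero _)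
    have hd : (2*(2*(t:ℝ)+1)) ≠ 0 := by positivity
    field_simp
    linarith [h1]
  simp only [heq]
  have hmain : Tendsto (fun t : ℕ => (1 + (t:ℝ)⁻¹) / (4 + 2*(t:ℝ)⁻¹)) atTop (nhds (1/4)) := by
    have h1 : Tendsto (fun t : ℕ => ((t:ℝ))⁻¹) atTop (nhds 0) :=
      tendsto_inv_atTop_nhds_zero_nat
    have ha : Tendsto (fun t : ℕ => 1 + ((t:ℝ))⁻¹) atTop (nhds (1 + 0)) :=
      tendsto_const_nhds.add h1
    have hb : Tendsto (fun t : ℕ => 4 + 2*((t:ℝ))⁻¹) atTop (nhds (4 + 2*0)) :=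
      tendsto_const_nhds.add (h1.const_mul 2)
    have h2 := ha.div hb (by norm_num)
    simpa [Pi.div_def] using h2
  refine hmain.congr' ?_
  filter_upwards [eventually_ge_atTop 1] with t ht
  have ht' : (t:ℝ) ≠ 0 := Nat.cast_ne_zero.mpr (by omega)
  rw [div_eq_div_iff (by positivity) (by positivity)]
  have h : ((t:ℝ))⁻¹ * (t:ℝ) = 1 := inv_mul_cancel₀ ht'
  nlinarith [h]

lemma Bshift (d : ℕ) :
    Tendsto (fun m : ℕ => (centralBinom m : ℝ) / centralBinom (m + d)) atTop
      (nhds ((1:ℝ)/4^d)) := by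
  induction d with
  | zero =>
    have : ∀ m : ℕ, (centralBinom m : ℝ) / centralBinom (m + 0) = 1 := fun m => by
      rw [add_zero, div_self (Nat.cast_ne_zero.mpr (centralBinom_ne_zero m))]
    simp only [this, pow_zero]
    simpa using tendsto_const_nhds
  | succ d ih =>
    have h2 : Tendsto (fun m : ℕ => (centralBinom (m+d) : ℝ) / centralBinom (m+d+1)) atTop
        (nhds (1/4)) := Bratio_tendsto.comp (tendsto_add_atTop_nat d)
    have key := ih.mul h2
    have hval : (1:ℝ)/4^d * (1/4) = 1/4^(d+1) := by rw [pow_succ]; ring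
    rw [hval] at key
    refine key.congr fun m => ?_
    have hb : (centralBinom (m+d) : ℝ) ≠ 0 := Nat.cast_ne_zero.mpr (centralBinom_ne_zero _)
    have hc : (centralBinom (m+d+1) : ℝ) ≠ 0 := Nat.cast_ne_zero.mpr (centralBinom_ne_zero _)
    rw [show m + (d+1) = m + d + 1 from by omega]
    field_simp

/-- Fix `k ≥ 1`. With `l(n)` the total number of vertices having exactly
`k` vertices in their subtree over all ordered trees with `n` vertices (defined by
`l(0) = 0` and, for `n ≥ 1`, `l(n) = catalan(k−1)·[n = k] + ∑_{i=1}^{n−1} l(i)·catalan(n−i)`),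
one has `l(n)/(n·catalan(n−1)) → catalan(k−1)/2^{2k−1}` as `n → ∞`. -/
theorem ordered_trees_prob_k_vertices_in_subtree
    (k : ℕ) (hk : 1 ≤ k)
    (l : ℕ → ℝ) (hl0 : l 0 = 0)
    (hl : ∀ n, 1 ≤ n →
      l n = (if n = k then (catalan (k - 1) : ℝ) else 0)
        + ∑ i ∈ Finset.Icc 1 (n - 1), l i * (catalan (n - i) : ℝ)) :
    Tendsto (fun n : ℕ => l n / (n * (catalan (n - 1) : ℝ))) atTop
      (nhds ((catalan (k - 1) : ℝ) / 2 ^ (2 * k - 1))) := by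
  have hcf := closed_form k hk l hl0 hl
  set c : ℝ := (catalan (k-1) : ℝ) with hc
  have hcomp : Tendsto (fun n : ℕ =>
      (centralBinom (n-k) : ℝ) / centralBinom ((n-k) + (k-1))) atTop
      (nhds ((1:ℝ)/4^(k-1))) :=
    (Bshift (k-1)).comp (tendsto_sub_atTop_nat k)
  have hcongr : ∀ᶠ n in atTop, (centralBinom (n-k) : ℝ) / centralBinom ((n-k)+(k-1))
      = (centralBinom (n-k) : ℝ) / centralBinom (n-1) := by
    filter_upwards [eventually_ge_atTop k] with n hn
    rw [show n - k + (k-1) = n - 1 from by omega]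
  have hlim : Tendsto (fun n : ℕ => c/2 * ((centralBinom (n-k) : ℝ) / centralBinom (n-1)))
      atTop (nhds (c/2 * (1/4^(k-1)))) :=
    (hcomp.congr' hcongr).const_mul (c/2)
  have heq : ∀ᶠ n in atTop, c/2 * ((centralBinom (n-k) : ℝ) / centralBinom (n-1))
      = l n / (n * (catalan (n-1) : ℝ)) := by
    filter_upwards [eventually_ge_atTop (k+1)] with n hn
    rw [hcf n, gfun, if_neg (by omega), if_neg (by omega)]
    have hnc : ((n:ℝ)) * (catalan (n-1) : ℝ) = (centralBinom (n-1) : ℝ) := by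
      have h1 : ((n-1)+1) * catalan (n-1) = centralBinom (n-1) :=
        succ_mul_catalan_eq_centralBinom (n-1)
      rw [show n - 1 + 1 = n from by omega] at h1
      exact_mod_cast h1
    rw [hnc, ← hc]
    ring
  have final := hlim.congr' heq
  have hval : c/2 * (1/4^(k-1)) = c / 2 ^ (2*k-1) := by
    rw [show 2*k - 1 = 2*(k-1) + 1 from by omega, pow_succ, pow_mul]
    norm_num
    ring
  rwa [hval] at final
end

section
/- Let B ∈ ℝ⟦X⟧ be the unique formal power series with constant term 0 satisfying B² − B + X = 0 (so B = ∑_{n≥1} catalan(n−1)Xⁿ is the generating function for full binary trees counted by leaves). For all formal power series R, V ∈ ℝ⟦X⟧ satisfying V = R + 2·V·B, one has (1 − 4X)·V² = R². (Equivalently, V = R/√(1 − 4x): the generating function for the number of vertices over all full binary trees whose subtree has a given property equals the generating function R for the number of full binary trees whose root has that property divided by √(1 − 4x).) -/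
/-- Let `B ∈ ℝ⟦X⟧` be the unique formal power series with constant term 0
satisfying `B² − B + X = 0` (the generating function for full binary trees counted by
leaves). For all formal power series `R, V` satisfying `V = R + 2·V·B`, one has
`(1 − 4X)·V² = R²` (i.e. `V = R/√(1 − 4X)`). -/
theorem full_binary_trees_subtree_gf_relation
    (B : PowerSeries ℝ) (hB0 : PowerSeries.constantCoeff B = 0)
    (hB : B ^ 2 - B + PowerSeries.X = 0)
    (R V : PowerSeries ℝ) (hV : V = R + 2 * V * B) :
    (1 - 4 * PowerSeries.X) * V ^ 2 = R ^ 2 := by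
  linear_combination (V + R - 2 * V * B) * hV - 4 * V ^ 2 * hB
end

section
/- For every real number x with |x| < 1/4, the series ∑_{n=1}^∞ n·catalan(n−1)·xⁿ converges and ∑_{n=1}^∞ n·catalan(n−1)·xⁿ = x/√(1 − 4x). (This is the generating function for the total number of leaves in all full binary trees with n leaves.) -/
open Set

lemma my_centralBinom_le_four_pow (n : ℕ) : Nat.centralBinom n ≤ 4 ^ n := by
  induction n with
  | zero => simp [Nat.centralBinom_zero]
  | succ n ih =>
    have h := Nat.succ_mul_centralBinom_succ n
    have h2 : (n + 1) * Nat.centralBinom (n + 1) ≤ (n + 1) * 4 ^ (n + 1) := by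
      rw [h]
      calc 2 * (2 * n + 1) * Nat.centralBinom n ≤ 4 * (n + 1) * 4 ^ n :=
            Nat.mul_le_mul (by omega) ih
        _ = (n + 1) * 4 ^ (n + 1) := by ring
    exact Nat.le_of_mul_le_mul_left h2 (Nat.succ_pos n)

set_option maxHeartbeats 1000000 in
/-- For every real `x` with `|x| < 1/4`, the series
`∑_{n≥1} n·catalan(n−1)·xⁿ` (indexed below by `n` with term `(n+1)·catalan(n)·x^{n+1}`)
converges to `x/√(1 − 4x)`: the generating function for the total number of leaves in
all full binary trees with `n` leaves. -/
theorem full_binary_trees_total_leaves_gf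
    (x : ℝ) (hx : |x| < 1 / 4) :
    HasSum (fun n : ℕ => ((n + 1 : ℕ) : ℝ) * (catalan n : ℝ) * x ^ (n + 1))
      (x / Real.sqrt (1 - 4 * x)) := by
  obtain ⟨r, hxr, hr4⟩ : ∃ r, |x| < r ∧ r < 1 / 4 :=
    ⟨(|x| + 1 / 4) / 2, by linarith, by linarith⟩
  have hr0 : 0 < r := lt_of_le_of_lt (abs_nonneg x) hxr
  have h4r : ‖(4 * r : ℝ)‖ < 1 := by
    rw [Real.norm_eq_abs, abs_of_pos (by linarith)]; linarith
  set C : ℕ → ℝ := fun n => (Nat.centralBinom n : ℝ) with hCdef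
  have hC0 : ∀ n, 0 ≤ C n := fun n => Nat.cast_nonneg _
  have hCle : ∀ n, C n ≤ 4 ^ n := by
    intro n
    simp only [hCdef]
    exact_mod_cast my_centralBinom_le_four_pow n
  set t : Set ℝ := Ioo (-r) r with htdef
  have hxt : x ∈ t := by
    obtain ⟨h1, h2⟩ := abs_lt.1 hxr
    exact ⟨h1, h2⟩
  have h0t : (0 : ℝ) ∈ t := ⟨by linarith, hr0⟩
  -- summability of the basic series on t
  have habs : ∀ y ∈ t, |y| ≤ r := by
    intro y hy
    exact le_of_lt (abs_lt.2 ⟨hy.1, hy.2⟩)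
  have hgs : ∀ y ∈ t, Summable fun n => C n * y ^ n := by
    intro y hy
    apply Summable.of_norm_bounded (summable_geometric_of_norm_lt_one h4r)
    intro n
    rw [norm_mul, norm_pow, Real.norm_eq_abs, Real.norm_eq_abs,
      abs_of_nonneg (hC0 n)]
    calc C n * |y| ^ n ≤ 4 ^ n * r ^ n := by
          apply mul_le_mul (hCle n) (pow_le_pow_left₀ (abs_nonneg y) (habs y hy) n)
            (pow_nonneg (abs_nonneg y) n) (by positivity)
      _ = (4 * r) ^ n := by rw [mul_pow]
  -- summable bound for the derivative series
  set u : ℕ → ℝ := fun n => 4 ^ n * ((n : ℝ) * r ^ (n - 1)) with hudef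
  have hu : Summable u := by
    rw [← summable_nat_add_iff 1]
    have h1 : Summable fun n : ℕ => ((n : ℝ) + 1) * (4 * r) ^ n := by
      have a := summable_pow_mul_geometric_of_norm_lt_one 1 h4r
      have b := summable_geometric_of_norm_lt_one h4r
      apply (a.add b).congr
      intro n; push_cast; ring
    apply (h1.mul_left 4).congr
    intro n
    simp only [hudef, Nat.add_sub_cancel]
    push_cast
    ring
  have hbound : ∀ (n : ℕ), ∀ y ∈ t, ‖C n * ((n : ℝ) * y ^ (n - 1))‖ ≤ u n := by
    intro n y hy
    rw [norm_mul, norm_mul, norm_pow, Real.norm_eq_abs, Real.norm_eq_abs,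
      Real.norm_eq_abs, abs_of_nonneg (hC0 n), abs_of_nonneg (Nat.cast_nonneg n)]
    apply mul_le_mul (hCle n) _ (by positivity) (by positivity)
    exact mul_le_mul_of_nonneg_left
      (pow_le_pow_left₀ (abs_nonneg y) (habs y hy) _) (Nat.cast_nonneg n)
  set f : ℝ → ℝ := fun y => ∑' n, C n * y ^ n with hfdef
  -- term-by-term differentiation
  have hD : ∀ y ∈ t, HasDerivAt f (∑' n, C n * ((n : ℝ) * y ^ (n - 1))) y := by
    intro y hy
    exact hasDerivAt_tsum_of_isPreconnected hu isOpen_Ioo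
      (convex_Ioo _ _).isPreconnected
      (fun n z _ => (hasDerivAt_pow n z).const_mul (C n))
      hbound h0t (hgs 0 h0t) hy
  -- the ODE: (1 - 4 y) f' = 2 f on t
  have hODE : ∀ y ∈ t,
      (1 - 4 * y) * (∑' n, C n * ((n : ℝ) * y ^ (n - 1))) = 2 * f y := by
    intro y hy
    set A := ∑' n, C n * ((n : ℝ) * y ^ (n - 1)) with hAdef
    have hsA : Summable fun n => C n * ((n : ℝ) * y ^ (n - 1)) :=
      Summable.of_norm_bounded hu (fun n => hbound n y hy)
    have hrec : ∀ n : ℕ, ((n : ℝ) + 1) * C (n + 1) = (4 * n + 2) * C n := by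
      intro n
      have h := congrArg (Nat.cast : ℕ → ℝ) (Nat.succ_mul_centralBinom_succ n)
      push_cast at h
      simp only [hCdef]
      push_cast
      linarith
    have hterm : ∀ n : ℕ, C (n + 1) * (((n : ℕ) + 1 : ℝ) * y ^ n) =
        4 * (y * (C n * ((n : ℝ) * y ^ (n - 1)))) + 2 * (C n * y ^ n) := by
      intro n
      cases n with
      | zero =>
        have h1 : Nat.centralBinom 1 = 2 := by decide
        have h0 : Nat.centralBinom 0 = 1 := by decide
        simp [hCdef, h1, h0]
      | succ m =>
        have h := hrec (m + 1)
        simp only [Nat.add_sub_cancel]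
        push_cast at h ⊢
        linear_combination y ^ (m + 1) * h
    have hshift : A = ∑' n, C (n + 1) * (((n : ℕ) + 1 : ℝ) * y ^ n) := by
      rw [hAdef, Summable.tsum_eq_zero_add hsA]
      simp
    have hsplit : (∑' n, C (n + 1) * (((n : ℕ) + 1 : ℝ) * y ^ n)) =
        4 * (y * A) + 2 * f y := by
      have s1 : Summable fun n => 4 * (y * (C n * ((n : ℝ) * y ^ (n - 1)))) :=
        ((hsA.mul_left y).mul_left 4)
      have s2 : Summable fun n => 2 * (C n * y ^ n) := (hgs y hy).mul_left 2
      calc (∑' n, C (n + 1) * (((n : ℕ) + 1 : ℝ) * y ^ n))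
          = ∑' n, (4 * (y * (C n * ((n : ℝ) * y ^ (n - 1)))) + 2 * (C n * y ^ n)) := by
            exact tsum_congr hterm
        _ = (∑' n, 4 * (y * (C n * ((n : ℝ) * y ^ (n - 1))))) +
            ∑' n, 2 * (C n * y ^ n) := Summable.tsum_add s1 s2
        _ = 4 * (y * A) + 2 * f y := by
            rw [tsum_mul_left, tsum_mul_left, tsum_mul_left]
    have hA : A = 4 * (y * A) + 2 * f y := by
      conv_lhs => rw [hshift]
      exact hsplit
    linear_combination hA
  -- h := f^2 * (1 - 4y) has zero derivative on t
  set h : ℝ → ℝ := fun y => (f y) ^ 2 * (1 - 4 * y) with hhdef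
  have hh : ∀ y ∈ t, HasDerivAt h 0 y := by
    intro y hy
    set A := ∑' n, C n * ((n : ℝ) * y ^ (n - 1)) with hAdef
    have d1 : HasDerivAt (fun z => (f z) ^ 2) (2 * f y ^ 1 * A) y := (hD y hy).pow 2
    have d2 : HasDerivAt (fun z : ℝ => 1 - 4 * z) (-4) y := by
      have : HasDerivAt (fun z : ℝ => 4 * z) 4 y := by
        simpa using (hasDerivAt_id y).const_mul (4 : ℝ)
      simpa using this.const_sub 1
    have := d1.mul d2
    have hode := hODE y hy
    refine this.congr_deriv ?_
    linear_combination (2 * f y) * hode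
  -- h is constant on t
  have hconst : ∀ y ∈ t, h y = h 0 := by
    intro y hy
    have hdiff : DifferentiableOn ℝ h t := fun z hz =>
      ((hh z hz).differentiableAt).differentiableWithinAt
    have hfd : ∀ z ∈ t, fderivWithin ℝ h t z = 0 := by
      intro z hz
      rw [fderivWithin_of_isOpen isOpen_Ioo hz,
        ((hh z hz).hasFDerivAt).fderiv]
      ext w
      simp
    exact (convex_Ioo _ _).is_const_of_fderivWithin_eq_zero hdiff hfd hy h0t
  have hf0 : f 0 = 1 := by
    have : (∑' n, C n * (0 : ℝ) ^ n) = C 0 * (0 : ℝ) ^ 0 := by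
      apply tsum_eq_single 0
      intro b hb
      simp [zero_pow hb]
    rw [show f 0 = ∑' n, C n * (0 : ℝ) ^ n from rfl, this]; simp only [hCdef, Nat.centralBinom_zero]
    norm_num
  have hval : ∀ y ∈ t, (f y) ^ 2 * (1 - 4 * y) = 1 := by
    intro y hy
    have := hconst y hy
    simp only [hhdef] at this
    rw [this, hf0]
    ring
  -- positivity of f x
  have hfpos : 0 < f x := by
    by_contra hneg
    push_neg at hneg
    have hsub : uIcc (0 : ℝ) x ⊆ t := ordConnected_Ioo.uIcc_subset h0t hxt
    have hcont : ContinuousOn f (uIcc (0 : ℝ) x) := fun z hz =>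
      ((hD z (hsub hz)).continuousAt).continuousWithinAt
    have hmem : (0 : ℝ) ∈ uIcc (f 0) (f x) := by
      rw [hf0, Set.mem_uIcc]
      right
      exact ⟨hneg, by norm_num⟩
    obtain ⟨c, hc, hfc⟩ := intermediate_value_uIcc hcont hmem
    have := hval c (hsub hc)
    rw [hfc] at this
    norm_num at this
  -- conclude
  have h14 : 0 < 1 - 4 * x := by
    obtain ⟨h1, h2⟩ := abs_lt.1 hx
    linarith
  have hxval : (f x) ^ 2 * (1 - 4 * x) = 1 := hval x hxt
  have hs2 : Real.sqrt (1 - 4 * x) ^ 2 = 1 - 4 * x := Real.sq_sqrt h14.le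
  have hspos : 0 < Real.sqrt (1 - 4 * x) := Real.sqrt_pos.2 h14
  have hkey : Real.sqrt (1 - 4 * x) * f x = 1 := by
    have hsq : (Real.sqrt (1 - 4 * x) * f x) ^ 2 = 1 := by
      rw [mul_pow, hs2]
      linarith [hxval]
    have hpos : 0 < Real.sqrt (1 - 4 * x) * f x := mul_pos hspos hfpos
    nlinarith [hsq, hpos]
  have hfinal : x / Real.sqrt (1 - 4 * x) = x * f x := by
    rw [div_eq_iff (ne_of_gt hspos)]
    linear_combination -x * hkey
  rw [hfinal]
  have hsum : HasSum (fun n => C n * x ^ n) (f x) := (hgs x hxt).hasSum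
  have := hsum.mul_left x
  refine this.congr_fun (fun n => ?_)
  have h := congrArg (Nat.cast : ℕ → ℝ) (succ_mul_catalan_eq_centralBinom n)
  push_cast at h
  simp only [hCdef]
  push_cast
  linear_combination x ^ (n + 1) * h
end

section
/- For every real number x with 0 < x ≤ 3 − 2√2, the series ∑_{n=1}^∞ s(n)·xⁿ converges and ∑_{n=1}^∞ s(n)·xⁿ = 2x/(1 + x + √(1 − 6x + x²)). -/
open Finset

/-- For every real `x` with `0 < x ≤ 3 − 2√2`, the series
`∑_{n≥1} s(n)·xⁿ` (where `s` is the Schröder tree counting sequence, with `s 0 = 0`)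
converges to `2x/(1 + x + √(1 − 6x + x²))`. Since `s 0 = 0`, summing over all `n : ℕ`
is the same as summing over `n ≥ 1`. -/
theorem schroeder_generating_function_value
    (s : ℕ → ℕ) (hs0 : s 0 = 0) (hs1 : s 1 = 1)
    (hs : ∀ n, 2 ≤ n →
      s n = 2 * ∑ i ∈ Finset.Icc 1 (n - 1), s i * s (n - i) - s (n - 1))
    (x : ℝ) (hx : 0 < x) (hx' : x ≤ 3 - 2 * Real.sqrt 2) :
    HasSum (fun n : ℕ => (s n : ℝ) * x ^ n)
      (2 * x / (1 + x + Real.sqrt (1 - 6 * x + x ^ 2))) := by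
  have h2 : (Real.sqrt 2)^2 = 2 := Real.sq_sqrt (by norm_num)
  have h2n : (0:ℝ) ≤ Real.sqrt 2 := Real.sqrt_nonneg 2
  have hx02 : x ≤ 0.2 := by nlinarith
  have hD : 0 ≤ 1 - 6*x + x^2 := by nlinarith
  have hDeq : 1 - 6 * x + x ^ 2 = 1 - 6*x + x^2 := by ring
  rw [hDeq]
  set q := Real.sqrt (1 - 6*x + x^2) with hqdef
  have hq2 : q^2 = 1 - 6*x + x^2 := Real.sq_sqrt hD
  have hq0 : 0 ≤ q := Real.sqrt_nonneg _
  have hq_le : q ≤ 1 - 3*x := by nlinarith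
  set t := (1 + x - q)/4 with htdef
  have hxt : x ≤ t := by rw [htdef]; linarith
  have ht0 : 0 < t := lt_of_lt_of_le hx hxt
  have hteq : x + 2*t^2 = (1+x)*t := by rw [htdef]; linear_combination hq2/8
  have hden : (0:ℝ) < 1 + x + q := by linarith
  have hval : 2*x/(1+x+q) = t := by
    rw [div_eq_iff hden.ne', htdef]; linear_combination hq2/4
  -- the sequence of terms
  set a : ℕ → ℝ := fun n => (s n : ℝ) * x ^ n with hadef
  have ha0 : a 0 = 0 := by simp [hadef, hs0]
  have ha1 : a 1 = x := by simp [hadef, hs1]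
  have han : ∀ n, 0 ≤ a n := fun n => by positivity
  -- the recurrence over the reals
  have hrec : ∀ n, 2 ≤ n →
      a n = 2 * (∑ i ∈ Finset.Icc 1 (n-1), a i * a (n-i)) - x * a (n-1) := by
    intro n hn
    obtain ⟨m, rfl⟩ : ∃ m, n = m + 2 := ⟨n - 2, by omega⟩
    have hsub : s (m+1) ≤ 2 * ∑ i ∈ Finset.Icc 1 (m+1), s i * s (m+2-i) := by
      have h1 : s (m+1) * s (m+2-(m+1)) ≤ ∑ i ∈ Finset.Icc 1 (m+1), s i * s (m+2-i) :=
        Finset.single_le_sum (f := fun i => s i * s (m+2-i))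
          (fun i _ => Nat.zero_le _) (Finset.mem_Icc.mpr ⟨by omega, le_refl _⟩)
      have h2 : m + 2 - (m+1) = 1 := by omega
      rw [h2, hs1, mul_one] at h1
      omega
    have hcast : (s (m+2) : ℝ) =
        2 * (∑ i ∈ Finset.Icc 1 (m+1), (s i : ℝ) * (s (m+2-i) : ℝ)) - (s (m+1) : ℝ) := by
      have := hs (m+2) (by omega)
      simp only [show m+2-1 = m+1 from rfl, show m+2-(m+2-1) = 1 by omega] at this
      rw [this, Nat.cast_sub hsub]
      push_cast
      ring_nf
    have hsum : (∑ i ∈ Finset.Icc 1 (m+1), a i * a (m+2-i))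
        = ∑ i ∈ Finset.Icc 1 (m+1), (s i : ℝ) * (s (m+2-i) : ℝ) * x^(m+2) := by
      refine Finset.sum_congr rfl (fun i hi => ?_)
      rw [Finset.mem_Icc] at hi
      simp only [hadef]
      rw [show (s i : ℝ) * x ^ i * ((s (m+2-i) : ℝ) * x ^ (m+2-i))
        = (s i : ℝ) * (s (m+2-i):ℝ) * (x ^ i * x ^ (m+2-i)) by ring, ← pow_add,
        show i + (m+2-i) = m+2 by omega]
    show a (m+2) = 2 * (∑ i ∈ Finset.Icc 1 (m+2-1), a i * a (m+2-i)) - x * a (m+2-1)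
    rw [show m+2-1 = m+1 from rfl, hsum, ← Finset.sum_mul, hadef]
    simp only []
    rw [hcast]
    ring
  -- the partial-sum recurrence identity
  have key : ∀ M : ℕ, (∑ n ∈ range (M+3), a n) = x
      + 2 * (∑ n ∈ Ico 2 (M+3), ∑ i ∈ Icc 1 (n-1), a i * a (n-i))
      - x * (∑ n ∈ range (M+2), a n) := by
    intro M
    have hsplit : ∑ n ∈ range (M+3), a n
        = (∑ n ∈ Ico 0 2, a n) + ∑ n ∈ Ico 2 (M+3), a n := by
      rw [Finset.range_eq_Ico, Finset.sum_Ico_consecutive a (by omega) (by omega)]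
    have h02 : (∑ n ∈ Ico 0 2, a n) = x := by
      rw [show Ico 0 2 = ({0, 1} : Finset ℕ) from rfl]
      simp [ha0, ha1]
    have hmid : ∑ n ∈ Ico 2 (M+3), a n
        = 2 * (∑ n ∈ Ico 2 (M+3), ∑ i ∈ Icc 1 (n-1), a i * a (n-i))
          - x * (∑ n ∈ Ico 2 (M+3), a (n-1)) := by
      rw [Finset.mul_sum, Finset.mul_sum, ← Finset.sum_sub_distrib]
      exact Finset.sum_congr rfl (fun n hn => hrec n (Finset.mem_Ico.mp hn).1)
    have hshift : (∑ n ∈ Ico 2 (M+3), a (n-1)) = ∑ n ∈ range (M+2), a n := by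
      rw [Finset.sum_Ico_eq_sum_range, Finset.sum_range_succ' a (M+1), ha0, add_zero]
      exact Finset.sum_congr rfl (fun i _ => by congr 1; omega)
    rw [hsplit, h02, hmid, hshift]
    ring
  -- the convolution bound
  have hCbound : ∀ M : ℕ, (∑ n ∈ Ico 2 (M+3), ∑ i ∈ Icc 1 (n-1), a i * a (n-i))
      ≤ (∑ n ∈ range (M+2), a n)^2 := by
    intro M
    rw [Finset.sum_sigma' (Ico 2 (M+3)) (fun n => Icc 1 (n-1)) (fun n i => a i * a (n - i))]
    set σ := (Ico 2 (M+3)).sigma (fun n => Icc 1 (n-1)) with hσ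
    set g : (Σ _ : ℕ, ℕ) → ℕ × ℕ := fun p => (p.2, p.1 - p.2) with hg
    have hmem : ∀ p ∈ σ, 2 ≤ p.1 ∧ p.1 < M+3 ∧ 1 ≤ p.2 ∧ p.2 ≤ p.1 - 1 := by
      intro p hp
      rw [hσ, Finset.mem_sigma, Finset.mem_Ico, Finset.mem_Icc] at hp
      exact ⟨hp.1.1, hp.1.2, hp.2.1, hp.2.2⟩
    have hinj : ∀ p ∈ σ, ∀ r ∈ σ, g p = g r → p = r := by
      intro p hp r hr hpr
      obtain ⟨h1, h2, h3, h4⟩ := hmem p hp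
      obtain ⟨h1', h2', h3', h4'⟩ := hmem r hr
      rw [hg, Prod.mk.injEq] at hpr
      obtain ⟨e1, e2⟩ := hpr
      obtain ⟨n, i⟩ := p
      obtain ⟨n', i'⟩ := r
      simp only at e1 e2 h1 h2 h3 h4 h1' h2' h3' h4' ⊢
      have : n = n' := by omega
      subst this; subst e1; rfl
    calc ∑ p ∈ σ, a p.2 * a (p.1 - p.2)
        = ∑ r ∈ σ.image g, a r.1 * a r.2 := by
          rw [Finset.sum_image hinj]
      _ ≤ ∑ r ∈ (range (M+2)) ×ˢ (range (M+2)), a r.1 * a r.2 := by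
          apply Finset.sum_le_sum_of_subset_of_nonneg
          · intro r hr
            rw [Finset.mem_image] at hr
            obtain ⟨p, hp, rfl⟩ := hr
            obtain ⟨h1, h2, h3, h4⟩ := hmem p hp
            rw [Finset.mem_product, Finset.mem_range, Finset.mem_range]
            constructor <;> simp only [hg] <;> omega
          · intro r _ _
            exact mul_nonneg (han _) (han _)
      _ = (∑ n ∈ range (M+2), a n)^2 := by
          rw [Finset.sum_product, sq, Finset.sum_mul_sum]
  -- partial sums are bounded by t
  have hP : ∀ N, ∑ n ∈ range N, a n ≤ t := by
    intro N
    induction N with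
    | zero => simpa using ht0.le
    | succ N ih =>
      rcases N with _ | _ | M
      · simpa [ha0] using ht0.le
      · rw [show 1 + 1 = 2 from rfl, Finset.sum_range_succ, Finset.sum_range_one, ha0, ha1]
        linarith
      · rw [show M + 2 + 1 = M + 3 from rfl, key M]
        have hC := hCbound M
        have hP0 : (0:ℝ) ≤ ∑ n ∈ range (M+2), a n := Finset.sum_nonneg fun i _ => han i
        nlinarith [mul_nonneg (sub_nonneg.2 ih) hP0,
          mul_nonneg (sub_nonneg.2 ih) (show (0:ℝ) ≤ 2*t - x by linarith), hteq, hC]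
  -- summability
  have hsumm : Summable a := summable_of_sum_range_le han hP
  set L := ∑' n, a n with hLdef
  have hL_le : L ≤ t := Real.tsum_le_of_sum_range_le han hP
  have hnorm : Summable (fun n => ‖a n‖) := by
    simpa [Real.norm_of_nonneg (han _)] using hsumm
  set c : ℕ → ℝ := fun n => ∑ kl ∈ antidiagonal n, a kl.1 * a kl.2 with hcdef
  have hcs : Summable c :=
    (summable_norm_sum_mul_antidiagonal_of_summable_norm hnorm hnorm).of_norm
  have hLL : ∑' n, c n = L * L :=
    (tsum_mul_tsum_eq_tsum_sum_antidiagonal_of_summable_norm hnorm hnorm).symm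
  have hc0 : c 0 = 0 := by simp [hcdef, Finset.Nat.antidiagonal_zero, ha0]
  have hc1 : c 1 = 0 := by
    simp [hcdef, Finset.Nat.antidiagonal_succ, Finset.Nat.antidiagonal_zero, ha0]
  have hcIcc : ∀ n, 2 ≤ n → c n = ∑ i ∈ Icc 1 (n-1), a i * a (n-i) := by
    intro n hn
    obtain ⟨m, rfl⟩ : ∃ m, n = m + 2 := ⟨n - 2, by omega⟩
    rw [hcdef]
    simp only []
    rw [Finset.Nat.sum_antidiagonal_eq_sum_range_succ_mk]
    rw [Nat.succ_eq_add_one, Finset.sum_range_succ,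
      show m + 2 - (m+2) = 0 by omega, ha0, mul_zero, add_zero,
      Finset.sum_range_succ' _ (m+1), ha0]
    rw [show m+2-1 = m+1 from rfl, show Icc 1 (m+1) = Ico 1 (m+2) by
      rw [← Finset.Ico_add_one_right_eq_Icc]; rfl, Finset.sum_Ico_eq_sum_range]
    simp only [zero_mul, add_zero]
    exact (Finset.sum_congr rfl (fun i _ => by congr 2 <;> omega)).symm
  -- the sum satisfies the quadratic equation
  have hs2 : Summable (fun n => a (n+2)) := (summable_nat_add_iff 2).2 hsumm
  have hs1' : Summable (fun n => a (n+1)) := (summable_nat_add_iff 1).2 hsumm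
  have hcs2 : Summable (fun n => c (n+2)) := (summable_nat_add_iff 2).2 hcs
  have e1 : (∑ i ∈ range 2, a i) + ∑' n, a (n+2) = L := Summable.sum_add_tsum_nat_add 2 hsumm
  have e4 : (∑ i ∈ range 2, c i) + ∑' n, c (n+2) = ∑' n, c n := Summable.sum_add_tsum_nat_add 2 hcs
  have e5 : (∑ i ∈ range 1, a i) + ∑' n, a (n+1) = L := Summable.sum_add_tsum_nat_add 1 hsumm
  have hca : ∑' n, c (n+2) = L * L := by
    rw [Finset.sum_range_succ, Finset.sum_range_one, hc0, hc1] at e4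
    rw [hLL] at e4
    linarith
  have haa : ∑' n, a (n+1) = L := by
    rw [Finset.sum_range_one, ha0] at e5
    linarith
  have e2 : ∑' n, a (n+2) = ∑' n, (2 * c (n+2) - x * a (n+1)) := by
    refine tsum_congr (fun n => ?_)
    rw [hrec (n+2) (by omega), ← hcIcc (n+2) (by omega)]
    norm_num
  have e3 : ∑' n, (2 * c (n+2) - x * a (n+1)) = 2 * (L * L) - x * L := by
    rw [Summable.tsum_sub (hcs2.mul_left 2) (hs1'.mul_left x), tsum_mul_left, tsum_mul_left, hca, haa]
  have hquad : L = x + 2 * (L * L) - x * L := by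
    rw [Finset.sum_range_succ, Finset.sum_range_one, ha0, ha1, e2, e3] at e1
    linarith
  -- conclude L = t
  have hfact : (L - t) * (2*(L+t) - (1+x)) = 0 := by
    linear_combination -hquad - hteq
  have hLt : L = t := by
    rcases mul_eq_zero.mp hfact with h | h
    · linarith
    · rw [htdef] at h hL_le ⊢
      linarith
  have : HasSum a L := hsumm.hasSum
  rw [hval, ← hLt]
  exact this
end

section
/- Fix a real number x with 0 < x < 3 − 2√2, and set u := 1 − 6x + x² (so u > 0) and S := (1 + x − √u)/4. Then the function f(y) := (1 + xy − √((1 + xy)² − 4xy(y + 1)))/(2y + 2) is differentiable at y = 1 and f′(1) = ((3 − x + √u)/(4√u))·S. (That is, differentiating the bivariate Schröder generating function with respect to y and setting y = 1 yields the generating function V(x) = ((3 − x + √(1−6x+x²))/(4√(1−6x+x²)))·S(x) for the total number of vertices in all Schröder trees with n leaves.) -/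
/-- Fix a real `x` with `0 < x < 3 − 2√2`, and set `u = 1 − 6x + x²`
(so `u > 0`) and `S = (1 + x − √u)/4`. Then the bivariate Schröder generating function
`f(y) = (1 + xy − √((1 + xy)² − 4xy(y + 1)))/(2y + 2)` is differentiable at `y = 1`
with `f′(1) = ((3 − x + √u)/(4√u))·S`, the generating function for the total number of
vertices in all Schröder trees with `n` leaves. -/
theorem schroeder_vertex_gf_deriv
    (x u S : ℝ) (hx : 0 < x) (hx' : x < 3 - 2 * Real.sqrt 2)
    (hu : u = 1 - 6 * x + x ^ 2) (hS : S = (1 + x - Real.sqrt u) / 4) :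
    HasDerivAt
      (fun y : ℝ =>
        (1 + x * y - Real.sqrt ((1 + x * y) ^ 2 - 4 * x * y * (y + 1))) / (2 * y + 2))
      (((3 - x + Real.sqrt u) / (4 * Real.sqrt u)) * S) 1 := by
  have h2 : (0:ℝ) < Real.sqrt 2 := Real.sqrt_pos.mpr (by norm_num)
  have hupos : 0 < u := by
    have h8 : (Real.sqrt 2) ^ 2 = 2 := Real.sq_sqrt (by norm_num)
    have : u = (3 - x - 2 * Real.sqrt 2) * (3 - x + 2 * Real.sqrt 2) := by
      rw [hu]; nlinarith [h8]
    rw [this]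
    have h1 : 0 < 3 - x - 2 * Real.sqrt 2 := by linarith
    have h2' : 0 < 3 - x + 2 * Real.sqrt 2 := by linarith
    positivity
  set s := Real.sqrt u with hsdef
  have hs0 : 0 < s := Real.sqrt_pos.mpr hupos
  have hs2 : s ^ 2 = u := Real.sq_sqrt hupos.le
  -- the inner polynomial g
  have hA : HasDerivAt (fun y : ℝ => 1 + x * y) x 1 := by
    simpa using ((hasDerivAt_id (1:ℝ)).const_mul x).const_add 1
  have hB : HasDerivAt (fun y : ℝ => 4 * x * y * (y + 1))
      ((4 * x) * (1 + 1) + (4 * x * 1) * 1) 1 := by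
    have h1 : HasDerivAt (fun y : ℝ => 4 * x * y) (4 * x) 1 := by
      simpa using (hasDerivAt_id (1:ℝ)).const_mul (4 * x)
    have h2' : HasDerivAt (fun y : ℝ => y + 1) 1 1 := by
      simpa using (hasDerivAt_id (1:ℝ)).add_const 1
    simpa using h1.fun_mul h2'
  have hg : HasDerivAt (fun y : ℝ => (1 + x * y) ^ 2 - 4 * x * y * (y + 1))
      (2 * (1 + x) * x - ((4 * x) * (1 + 1) + (4 * x * 1) * 1)) 1 := by
    have := (hA.fun_pow 2).sub hB
    refine this.congr_deriv ?_
    ring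
  have hg1 : ((1 + x * 1) ^ 2 - 4 * x * 1 * (1 + 1)) = u := by rw [hu]; ring
  have hgne : ((1 + x * 1) ^ 2 - 4 * x * 1 * (1 + 1)) ≠ 0 := by
    rw [hg1]; exact hupos.ne'
  have hsq : HasDerivAt (fun y : ℝ => Real.sqrt ((1 + x * y) ^ 2 - 4 * x * y * (y + 1)))
      ((1 / (2 * s)) * (2 * (1 + x) * x - ((4 * x) * (1 + 1) + (4 * x * 1) * 1))) 1 := by
    have key := (Real.hasDerivAt_sqrt hgne).comp 1 hg
    rw [hg1] at key
    simpa [Function.comp_def, hsdef] using key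
  have hN : HasDerivAt (fun y : ℝ =>
      1 + x * y - Real.sqrt ((1 + x * y) ^ 2 - 4 * x * y * (y + 1)))
      (x - (1 / (2 * s)) * (2 * (1 + x) * x - ((4 * x) * (1 + 1) + (4 * x * 1) * 1))) 1 :=
    hA.sub hsq
  have hD : HasDerivAt (fun y : ℝ => 2 * y + 2) 2 1 := by
    simpa using ((hasDerivAt_id (1:ℝ)).const_mul 2).add_const 2
  have hDne : (2 * (1:ℝ) + 2) ≠ 0 := by norm_num
  have := hN.fun_div hD hDne
  refine this.congr_deriv ?_
  have hN1 : Real.sqrt ((1 + x * 1) ^ 2 - 4 * x * 1 * (1 + 1)) = s := by rw [hg1]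
  rw [hN1, hS]
  field_simp
  nlinarith [hs2, hs0, sq_nonneg s]
end

section
/- Let S ∈ ℝ⟦X⟧ be the unique formal power series with constant term 0 satisfying 2S² − (1 + X)S + X = 0 (the generating function for Schröder trees counted by leaves). For all formal power series R, T ∈ ℝ⟦X⟧ satisfying T·(2(1 − S)² − 1) = R·(1 − S)², one has (1 − 6X + X²)·T² = R²·(1 − S)². (Equivalently, if T = R + T·(1/(1−S)² − 1), i.e. T = R + ∑_{m≥2} m·T·S^{m−1}, then T = R·(3 − x + √(1−6x+x²))/(4√(1−6x+x²)): the generating function for the number of vertices over all Schröder trees whose subtree has a given property equals R times (3 − x + √(1−6x+x²))/(4√(1−6x+x²)), where R is the generating function for the number of Schröder trees whose root has that property.) -/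
/-- Let `S ∈ ℝ⟦X⟧` be the unique formal power series with constant term 0
satisfying `2S² − (1 + X)S + X = 0` (the Schröder tree generating function). For all
formal power series `R, T` satisfying `T·(2(1 − S)² − 1) = R·(1 − S)²`, one has
`(1 − 6X + X²)·T² = R²·(1 − S)²` (i.e. `T = R·(3 − X + √(1−6X+X²))/(4√(1−6X+X²))`). -/
theorem schroeder_subtree_gf_relation
    (S : PowerSeries ℝ) (hS0 : PowerSeries.constantCoeff S = 0)
    (hS : 2 * S ^ 2 - (1 + PowerSeries.X) * S + PowerSeries.X = 0)
    (R T : PowerSeries ℝ)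
    (hT : T * (2 * (1 - S) ^ 2 - 1) = R * (1 - S) ^ 2) :
    (1 - 6 * PowerSeries.X + PowerSeries.X ^ 2) * T ^ 2 = R ^ 2 * (1 - S) ^ 2 := by
  have key : (2 * (1 - S) ^ 2 - 1) ^ 2
      = (1 - 6 * PowerSeries.X + PowerSeries.X ^ 2) * (1 - S) ^ 2 := by
    linear_combination (2 * S ^ 2 + (PowerSeries.X - 7) * S + (6 - PowerSeries.X)) * hS
  have hu : (1 - S) ≠ 0 := by
    intro h
    have := congrArg (PowerSeries.constantCoeff (R := ℝ)) h
    simp [hS0] at this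
  have h2 : ((1 - 6 * PowerSeries.X + PowerSeries.X ^ 2) * T ^ 2) * (1 - S) ^ 2
      = (R ^ 2 * (1 - S) ^ 2) * (1 - S) ^ 2 := by
    have := congrArg (· ^ 2) hT
    calc ((1 - 6 * PowerSeries.X + PowerSeries.X ^ 2) * T ^ 2) * (1 - S) ^ 2
        = T ^ 2 * (2 * (1 - S) ^ 2 - 1) ^ 2 := by rw [key]; ring
      _ = (T * (2 * (1 - S) ^ 2 - 1)) ^ 2 := by ring
      _ = (R * (1 - S) ^ 2) ^ 2 := by rw [hT]
      _ = (R ^ 2 * (1 - S) ^ 2) * (1 - S) ^ 2 := by ring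
  exact mul_right_cancel₀ (pow_ne_zero 2 hu) h2
end

section
/- With v(n) the total number of vertices in all Schröder trees with n leaves (defined by v(0) = 0, v(1) = 1, and v(n) = 4·∑_{i=1}^{n−1} s(i)·v(n−i) − v(n−1) + ∑_{i=1}^{n−1} s(i)·s(n−i) − s(n−1) for n ≥ 2), the ratio (n·s(n))/v(n) converges as n → ∞ to 2 − √2 ≈ 0.586; that is, the probability that a uniformly random vertex of a uniformly random Schröder tree with n leaves is a leaf tends to 2 − √2 as the number of leaves goes to infinity. -/
open Filter PowerSeries

lemma sum_range_to_Icc {M : Type*} [AddCommMonoid M] (f : ℕ → M) (n : ℕ) (hn : 1 ≤ n)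
    (h0 : f 0 = 0) (hn' : f n = 0) :
    ∑ i ∈ Finset.range (n + 1), f i = ∑ i ∈ Finset.Icc 1 (n - 1), f i := by
  refine (Finset.sum_subset ?_ ?_).symm
  · intro i hi
    simp only [Finset.mem_Icc] at hi
    simp only [Finset.mem_range]
    omega
  · intro i hi hni
    simp only [Finset.mem_range] at hi
    simp only [Finset.mem_Icc] at hni
    have : i = 0 ∨ i = n := by omega
    rcases this with h | h <;> simp [h, h0, hn']

lemma coeff_X_pow_mul_le' (p : PowerSeries ℝ) (n d : ℕ) (h : d ≤ n) :
    coeff n (X ^ d * p) = coeff (n - d) p := by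
  rw [coeff_X_pow_mul']; simp [h]

lemma key_step (M A B L : ℝ) (hM : 1 ≤ M) (hB : 3 ≤ B)
    (hK : L^2 - 6*L + 1 = 0) (hL58 : (5.8:ℝ) ≤ L) (hLub : L ≤ 5.83)
    (hre : |B - L| ≤ 10/(M+2))
    (hR' : (M+3) * A * B = (6*M+9)*B - M) :
    3 ≤ A ∧ |A - L| ≤ 10/(M+3) := by
  have hE' : (A - L) * ((M+3) * L * B) = -((3*L-9) * (L * B)) + M * (B - L) := by
    linear_combination L * hR' - M * B * hK
  have hLB : (17.4:ℝ) ≤ L * B := by nlinarith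
  have habs1 : |A - L| * ((M+3) * L * B) ≤ (3*L-9) * (L * B) + M * (10/(M+2)) := by
    rw [← abs_of_pos (show (0:ℝ) < (M+3) * L * B by positivity), ← abs_mul, hE']
    refine le_trans (abs_add_le _ _) ?_
    have e1 : |(-((3*L-9) * (L * B)))| = (3*L-9) * (L*B) := by
      rw [abs_neg, abs_of_nonneg (by nlinarith)]
    have e2 : |M * (B - L)| ≤ M * (10/(M+2)) := by
      rw [abs_mul, abs_of_nonneg (by linarith : (0:ℝ) ≤ M)]
      exact mul_le_mul_of_nonneg_left hre (by linarith)
    linarith [e1.le, e2]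
  have hm2 : M * (10/(M+2)) ≤ 10 := by
    rw [mul_div_assoc', div_le_iff₀ (by positivity)]
    linarith
  have hEb : |A - L| ≤ 10 / (M+3) := by
    rw [le_div_iff₀ (by positivity)]
    nlinarith [abs_nonneg (A - L), habs1, hLB, hm2]
  refine ⟨?_, hEb⟩
  have h1 := (abs_le.mp hEb).1
  have hm3 : 10/(M+3) ≤ 2.5 := by
    rw [div_le_iff₀ (by positivity)]; linarith
  linarith

section S

variable (s : ℕ → ℕ) (hs0 : s 0 = 0) (hs1 : s 1 = 1)
  (hs : ∀ n, 2 ≤ n →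
      s n = 2 * ∑ i ∈ Finset.Icc 1 (n - 1), s i * s (n - i) - s (n - 1))

include hs0 hs1 hs

lemma s_mono : ∀ n, 1 ≤ n → s (n - 1) ≤ s n := by
  intro n hn
  rcases Nat.lt_or_ge n 2 with h | h
  · interval_cases n <;> simp [hs0, hs1]
  · have hmem : n - 1 ∈ Finset.Icc 1 (n - 1) := by
      simp only [Finset.mem_Icc]; omega
    have hle : s (n - 1) * s (n - (n - 1)) ≤ ∑ i ∈ Finset.Icc 1 (n - 1), s i * s (n - i) :=
      Finset.single_le_sum (f := fun i => s i * s (n - i)) (fun i _ => Nat.zero_le _) hmem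
    have h1 : n - (n - 1) = 1 := by omega
    rw [h1, hs1, mul_one] at hle
    rw [hs n h]
    omega

lemma s_pos : ∀ n, 1 ≤ n → 1 ≤ s n := by
  intro n hn
  induction n with
  | zero => omega
  | succ m ih =>
    rcases Nat.eq_or_lt_of_le hn with h | h
    · simp [← h, hs1]
    · have := s_mono s hs0 hs1 hs (m + 1) hn
      have hm : 1 ≤ m := by omega
      simp only [Nat.add_sub_cancel] at this
      exact le_trans (ih hm) this

omit hs0 in
lemma s_key : ∀ n, 2 ≤ n →
    (s n : ℝ) + (s (n-1) : ℝ) = 2 * ∑ i ∈ Finset.Icc 1 (n - 1), (s i : ℝ) * (s (n - i) : ℝ) := by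
  intro n hn
  have hmem : n - 1 ∈ Finset.Icc 1 (n - 1) := by simp only [Finset.mem_Icc]; omega
  have hle : s (n - 1) * s (n - (n - 1)) ≤ ∑ i ∈ Finset.Icc 1 (n - 1), s i * s (n - i) :=
    Finset.single_le_sum (f := fun i => s i * s (n - i)) (fun i _ => Nat.zero_le _) hmem
  have h1 : n - (n - 1) = 1 := by omega
  rw [h1, hs1, mul_one] at hle
  have heq : s n + s (n - 1) = 2 * ∑ i ∈ Finset.Icc 1 (n - 1), s i * s (n - i) := by
    have := hs n hn; omega
  have := congrArg (fun k : ℕ => (k : ℝ)) heq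
  push_cast at this
  convert this using 2

lemma s_quadratic : 2 * (PowerSeries.mk fun n => (s n : ℝ))^2
    = (1 + X) * (PowerSeries.mk fun n => (s n : ℝ)) - X := by
  set S := PowerSeries.mk fun n => (s n : ℝ) with hS
  ext n
  have h2 : (2 : PowerSeries ℝ) = C 2 := (map_ofNat C 2).symm
  have hc2 : (coeff n) (2 * S^2) = 2 * ∑ i ∈ Finset.range (n+1), (s i : ℝ) * s (n - i) := by
    rw [h2, coeff_C_mul, sq, coeff_mul, Finset.Nat.sum_antidiagonal_eq_sum_range_succ_mk]
    simp [hS]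
  have hXS : (coeff n) (X * S) = if 1 ≤ n then (s (n-1) : ℝ) else 0 := by
    rw [show (X : PowerSeries ℝ) * S = X^1 * S by ring, coeff_X_pow_mul']
    simp [hS]
  have hcS : (coeff n) S = (s n : ℝ) := by simp [hS]
  have hcr : (coeff n) ((1 + X) * S - X)
      = (s n : ℝ) + (if 1 ≤ n then (s (n-1) : ℝ) else 0) - (if n = 1 then 1 else 0) := by
    rw [map_sub, add_mul, one_mul, map_add, hXS, coeff_X, hcS]
  rw [hc2, hcr]
  rcases Nat.lt_or_ge n 2 with h | h
  · interval_cases n <;> simp [hs0, hs1, Finset.sum_range_succ]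
  · have := s_key s hs1 hs n (by omega)
    rw [sum_range_to_Icc (fun i => (s i : ℝ) * (s (n - i) : ℝ)) n (by omega) (by simp [hs0])
      (by simp [hs0])]
    rw [if_pos (by omega), if_neg (by omega)]
    linarith

lemma s_rec :
    ∀ m : ℕ, ((m:ℝ)+3) * s (m+3) = (6*(m:ℝ)+9) * s (m+2) - (m:ℝ) * s (m+1) := by
  have hq := s_quadratic s hs0 hs1 hs
  set S := PowerSeries.mk fun n => (s n : ℝ) with hSdef
  set D := d⁄dX ℝ S with hD
  have h := congrArg (d⁄dX ℝ) hq
  simp only [map_sub, map_add, map_mul, Derivation.leibniz, smul_eq_mul,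
    derivative_X, Derivation.map_one_eq_zero,
    show ((2:ℝ⟦X⟧)) = ((2:ℕ):ℝ⟦X⟧) by norm_num, Derivation.map_natCast,
    Derivation.leibniz_pow] at h
  have h1 : (4 * S - 1 - X) * D = S - 1 := by linear_combination h
  have h2 : (1 - 6*X + X^2) * D = (X - 3) * S + (1 - X) := by
    linear_combination (4*S - 1 - X) * h1 + (2 - 8*D) * hq
  intro m
  have h3 := congrArg (coeff (m + 2)) h2
  have e1 : (1 - 6*X + X^2) * D = D - C 6 * (X^1 * D) + X^2 * D := by
    rw [show (C 6 : ℝ⟦X⟧) = 6 from map_ofNat _ 6]; ring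
  have e2 : (X - 3) * S + (1 - X) = X^1 * S - C 3 * S + (1 - X) := by
    rw [show (C 3 : ℝ⟦X⟧) = 3 from map_ofNat _ 3]; ring
  rw [e1, e2] at h3
  simp only [map_sub, map_add, coeff_C_mul,
    coeff_X_pow_mul_le' _ (m+2) 1 (by norm_num), coeff_X_pow_mul_le' _ (m+2) 2 (by norm_num),
    show m + 2 - 1 = m + 1 from rfl, show m + 2 - 2 = m from rfl, hD,
    PowerSeries.coeff_derivative, hSdef, coeff_mk, coeff_one, coeff_X] at h3
  norm_num at h3
  push_cast at h3
  ring_nf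
  ring_nf at h3
  linarith

lemma v_closed (v : ℕ → ℝ) (hv0 : v 0 = 0) (hv1 : v 1 = 1)
    (hv : ∀ n, 2 ≤ n →
      v n = 4 * (∑ i ∈ Finset.Icc 1 (n - 1), (s i : ℝ) * v (n - i)) - v (n - 1)
        + (∑ i ∈ Finset.Icc 1 (n - 1), (s i : ℝ) * (s (n - i) : ℝ)) - (s (n - 1) : ℝ)) :
    ∀ n : ℕ, 1 ≤ n → 4 * v n = ((n:ℝ)+1) * ((s n : ℝ) + (s (n+1) : ℝ)) := by
  have hq := s_quadratic s hs0 hs1 hs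
  set S := PowerSeries.mk fun n => (s n : ℝ) with hSdef
  set V := PowerSeries.mk v with hVdef
  set D := d⁄dX ℝ S with hD
  have h := congrArg (d⁄dX ℝ) hq
  simp only [map_sub, map_add, map_mul, Derivation.leibniz, smul_eq_mul,
    derivative_X, Derivation.map_one_eq_zero,
    show ((2:ℝ⟦X⟧)) = ((2:ℕ):ℝ⟦X⟧) by norm_num, Derivation.map_natCast,
    Derivation.leibniz_pow] at h
  have h1 : (4 * S - 1 - X) * D = S - 1 := by linear_combination h
  have h3 : (S + (1 + X) * D - 1) * (1 + X - 4*S) = 4 * (S^2 + X - X*S) := by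
    linear_combination (-(1+X)) * h1 - 4 * hq
  have hV : V * (1 + X - 4*S) = S^2 + X - X*S := by
    have e : V * (1 + X - 4*S) = V + X^1 * V - C 4 * (S * V) := by
      rw [show (C 4 : ℝ⟦X⟧) = 4 from map_ofNat _ 4]; ring
    have e2 : S^2 + X - X*S = S * S + X - X^1 * S := by ring
    ext n
    have hS2 : coeff n (S * S) = ∑ i ∈ Finset.range (n+1), (s i : ℝ) * (s (n-i) : ℝ) := by
      rw [coeff_mul, Finset.Nat.sum_antidiagonal_eq_sum_range_succ_mk]
      simp [hSdef]
    have hSV : coeff n (S * V) = ∑ i ∈ Finset.range (n+1), (s i : ℝ) * v (n-i) := by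
      rw [coeff_mul, Finset.Nat.sum_antidiagonal_eq_sum_range_succ_mk]
      simp [hSdef, hVdef]
    have hXV : coeff n (X^1 * V) = if 1 ≤ n then v (n-1) else 0 := by
      rw [coeff_X_pow_mul']
      simp [hVdef]
    have hXS : coeff n (X^1 * S) = if 1 ≤ n then (s (n-1) : ℝ) else 0 := by
      rw [coeff_X_pow_mul']
      simp [hSdef]
    rw [e, e2, map_sub, map_add, map_sub, map_add, coeff_C_mul, hS2, hSV, hXV, hXS, coeff_X]
    simp only [hVdef, coeff_mk]
    rcases Nat.lt_or_ge n 2 with hn | hn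
    · interval_cases n <;> simp [Finset.sum_range_succ, hs0, hs1, hv0, hv1]
    · rw [sum_range_to_Icc (fun i => (s i : ℝ) * v (n - i)) n (by omega) (by simp [hs0])
        (by simp [hv0]),
        sum_range_to_Icc (fun i => (s i : ℝ) * (s (n - i) : ℝ)) n (by omega) (by simp [hs0])
        (by simp [hs0]),
        if_pos (by omega : 1 ≤ n), if_pos (by omega : 1 ≤ n),
        if_neg (by omega : ¬ n = 1)]
      have := hv n hn
      linarith
  have hne : (1 + X - 4*S : ℝ⟦X⟧) ≠ 0 := by
    intro hcon
    have := congrArg (constantCoeff) hcon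
    simp [hSdef, hs0, constantCoeff_X] at this
  have hcancel : 4 * V = S + (1 + X) * D - 1 := by
    have hz : (4 * V - (S + (1 + X) * D - 1)) * (1 + X - 4*S) = 0 := by
      linear_combination 4 * hV - h3
    rcases mul_eq_zero.mp hz with hzz | hzz
    · linear_combination hzz
    · exact absurd hzz hne
  intro n hn
  obtain ⟨m, rfl⟩ : ∃ m, n = m + 1 := ⟨n - 1, by omega⟩
  have h4 := congrArg (coeff (m+1)) hcancel
  have e3 : (4 : ℝ⟦X⟧) * V = C 4 * V := by rw [show (C 4 : ℝ⟦X⟧) = 4 from map_ofNat _ 4]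
  have e4 : S + (1 + X) * D - 1 = S + (D + X^1 * D) - 1 := by ring
  rw [e3, e4] at h4
  simp only [map_sub, map_add, coeff_C_mul,
    coeff_X_pow_mul_le' _ (m+1) 1 (by norm_num),
    show m + 1 - 1 = m from rfl, hD, PowerSeries.coeff_derivative, hSdef, hVdef,
    coeff_mk, coeff_one] at h4
  norm_num at h4
  push_cast
  linarith

lemma ratio_tendsto :
    Tendsto (fun n : ℕ => (s (n+1) : ℝ) / (s n : ℝ)) atTop (nhds (3 + 2 * Real.sqrt 2)) := by
  have spos := s_pos s hs0 hs1 hs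
  have hs2 : s 2 = 1 := by
    have h := hs 2 (by norm_num)
    simpa [hs1] using h
  have hs3 : s 3 = 3 := by
    have h := hs 3 (by norm_num)
    rw [show Finset.Icc 1 2 = {1, 2} from rfl] at h
    simp [hs1, hs2] at h
    omega
  have srec := s_rec s hs0 hs1 hs
  set L : ℝ := 3 + 2 * Real.sqrt 2 with hL
  set r : ℕ → ℝ := fun n => (s (n+1) : ℝ) / (s n : ℝ) with hr
  have sq2 : Real.sqrt 2 ^ 2 = 2 := Real.sq_sqrt (by norm_num)
  have sq2lb : (1.414 : ℝ) ≤ Real.sqrt 2 := by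
    nlinarith [Real.sqrt_nonneg 2, sq2]
  have sq2ub : Real.sqrt 2 ≤ 1.415 := by
    nlinarith [Real.sqrt_nonneg 2, sq2]
  have hK : L^2 - 6*L + 1 = 0 := by rw [hL]; nlinarith [sq2]
  have hL58 : (5.8:ℝ) ≤ L := by rw [hL]; nlinarith
  have hLub : L ≤ 5.83 := by rw [hL]; nlinarith
  have hsp : ∀ n, 1 ≤ n → (0:ℝ) < s n := fun n hn => by
    exact_mod_cast Nat.lt_of_lt_of_le Nat.zero_lt_one (spos n hn)
  have key : ∀ n, 2 ≤ n → 3 ≤ r n ∧ |r n - L| ≤ 10 / ((n:ℝ)+1) := by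
    intro n hn
    induction n, hn using Nat.le_induction with
    | base =>
      have h2 : r 2 = 3 := by simp [hr, hs2, hs3]
      rw [h2]
      refine ⟨le_refl _, ?_⟩
      rw [abs_le]
      constructor <;> push_cast <;> nlinarith
    | succ n hn ih =>
      obtain ⟨hr3, hre⟩ := ih
      obtain ⟨m, rfl⟩ : ∃ m, n = m + 1 := ⟨n - 1, by omega⟩
      have hsm1 : (0:ℝ) < s (m+1) := hsp (m+1) (by omega)
      have hsm2 : (0:ℝ) < s (m+2) := hsp (m+2) (by omega)
      have hsm3 : (0:ℝ) < s (m+3) := hsp (m+3) (by omega)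
      have hrec := srec m
      have hR' : ((m:ℝ)+3) * r (m+2) * r (m+1) = (6*(m:ℝ)+9) * r (m+1) - m := by
        simp only [hr, show m+2+1 = m+3 from rfl, show m+1+1 = m+2 from rfl]
        field_simp
        ring_nf
        ring_nf at hrec
        nlinarith [hrec]
      have hre' : |r (m+1) - L| ≤ 10/((m:ℝ)+2) := by
        have := hre; push_cast at this; convert this using 2; push_cast; ring
      have := key_step (m:ℝ) (r (m+2)) (r (m+1)) L
        (by exact_mod_cast Nat.one_le_cast.mpr (by omega : 1 ≤ m)) hr3 hK hL58 hLub hre' hR'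
      obtain ⟨hA3, hAe⟩ := this
      refine ⟨hA3, ?_⟩
      have hcast : ((m:ℝ)+3) = ((m+1+1:ℕ):ℝ)+1 := by push_cast; ring
      rw [← hcast]; exact hAe
  have h10 : Tendsto (fun n : ℕ => 10 / ((n:ℝ)+1)) atTop (nhds 0) := by
    have := tendsto_one_div_add_atTop_nhds_zero_nat (𝕜 := ℝ)
    have h := this.const_mul (10:ℝ)
    simpa [div_eq_mul_inv, mul_comm] using h
  rw [Metric.tendsto_atTop]
  intro ε hε
  rw [Metric.tendsto_atTop] at h10
  obtain ⟨N, hN⟩ := h10 ε hε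
  refine ⟨max N 2, fun n hn => ?_⟩
  have h1 := (key n (le_trans (le_max_right N 2) hn)).2
  have h2 := hN n (le_trans (le_max_left N 2) hn)
  rw [Real.dist_eq] at h2 ⊢
  have he : |10/((n:ℝ)+1) - 0| = 10/((n:ℝ)+1) := by
    rw [sub_zero, abs_of_pos (by positivity)]
  rw [he] at h2
  calc |r n - L| ≤ 10/((n:ℝ)+1) := h1
  _ < ε := h2

end S

/-- With `s` the Schröder tree counting sequence and `v(n)` the total
number of vertices in all Schröder trees with `n` leaves, the ratio `(n·s(n))/v(n)`
converges to `2 − √2` as `n → ∞`: the probability that a uniformly random vertex of a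
uniformly random Schröder tree with `n` leaves is a leaf tends to `2 − √2`. -/
theorem schroeder_prob_leaf
    (s : ℕ → ℕ) (hs0 : s 0 = 0) (hs1 : s 1 = 1)
    (hs : ∀ n, 2 ≤ n →
      s n = 2 * ∑ i ∈ Finset.Icc 1 (n - 1), s i * s (n - i) - s (n - 1))
    (v : ℕ → ℝ) (hv0 : v 0 = 0) (hv1 : v 1 = 1)
    (hv : ∀ n, 2 ≤ n →
      v n = 4 * (∑ i ∈ Finset.Icc 1 (n - 1), (s i : ℝ) * v (n - i)) - v (n - 1)
        + (∑ i ∈ Finset.Icc 1 (n - 1), (s i : ℝ) * (s (n - i) : ℝ)) - (s (n - 1) : ℝ)) :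
    Tendsto (fun n : ℕ => ((n : ℝ) * (s n : ℝ)) / v n) atTop
      (nhds (2 - Real.sqrt 2)) := by
  have hrt := ratio_tendsto s hs0 hs1 hs
  have hcf := v_closed s hs0 hs1 hs v hv0 hv1 hv
  have spos := s_pos s hs0 hs1 hs
  have hsp : ∀ n, 1 ≤ n → (0:ℝ) < s n := fun n hn => by
    exact_mod_cast Nat.lt_of_lt_of_le Nat.zero_lt_one (spos n hn)
  set L : ℝ := 3 + 2 * Real.sqrt 2 with hL
  have sq2 : Real.sqrt 2 ^ 2 = 2 := Real.sq_sqrt (by norm_num)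
  have hL0 : (0:ℝ) < 1 + L := by
    rw [hL]; nlinarith [Real.sqrt_nonneg 2]
  -- the auxiliary sequence
  set g : ℕ → ℝ := fun n =>
    (4 * ((n:ℝ) / ((n:ℝ)+1))) * (1 / (1 + (s (n+1) : ℝ) / (s n : ℝ))) with hg
  have hgt : Tendsto g atTop (nhds ((4 * 1) * (1 / (1 + L)))) := by
    apply Tendsto.mul
    · apply Tendsto.const_mul
      have h1 : Tendsto (fun n : ℕ => 1 - 1 / ((n:ℝ)+1)) atTop (nhds (1 - 0)) :=
        tendsto_const_nhds.sub tendsto_one_div_add_atTop_nhds_zero_nat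
      rw [show (1:ℝ) - 0 = 1 by ring] at h1
      apply h1.congr
      intro n
      field_simp
      ring
    · exact (tendsto_const_nhds.div (tendsto_const_nhds.add hrt) (ne_of_gt hL0))
  have hval : (4 * 1) * (1 / (1 + L)) = 2 - Real.sqrt 2 := by
    rw [hL, mul_one, mul_one_div, div_eq_iff (by nlinarith [Real.sqrt_nonneg 2])]
    nlinarith [sq2]
  rw [hval] at hgt
  apply hgt.congr'
  rw [EventuallyEq, eventually_atTop]
  refine ⟨1, fun n hn => ?_⟩
  have hsn : (0:ℝ) < s n := hsp n hn
  have hsn1 : (0:ℝ) < s (n+1) := hsp (n+1) (by omega)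
  have hvn := hcf n hn
  have hvpos : (0:ℝ) < v n := by nlinarith
  rw [hg]
  rw [eq_div_iff (ne_of_gt hvpos)]
  have hn1 : (0:ℝ) < (n:ℝ)+1 := by positivity
  field_simp
  linear_combination hvn
end

section
/- ∑_{n=1}^∞ m(n)·(1/3)ⁿ = 1; that is, the asymptotic probabilities m(k)/3ᵏ that a random vertex of a large random Motzkin tree has exactly k vertices in its subtree sum to 1 over all k ≥ 1 (the statistic 'number of vertices in the subtree' is tight for Motzkin trees). -/
/-- With `m` the Motzkin tree counting sequence,
`∑_{n≥1} m(n)·(1/3)ⁿ = 1`: the asymptotic probabilities `m(k)/3ᵏ` that a random vertex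
of a large random Motzkin tree has exactly `k` vertices in its subtree sum to 1, so the
statistic is tight. Since `m 0 = 0`, summing over all `n : ℕ` is the same as summing
over `n ≥ 1`. -/
theorem motzkin_subtree_statistic_tight
    (m : ℕ → ℕ) (hm0 : m 0 = 0) (hm1 : m 1 = 1)
    (hm : ∀ n, 2 ≤ n →
      m n = m (n - 1) + ∑ i ∈ Finset.Icc 1 (n - 2), m i * m (n - 1 - i)) :
    HasSum (fun n : ℕ => (m n : ℝ) * (1 / 3) ^ n) 1 := by
  classical
  set a : ℕ → ℝ := fun n => (m n : ℝ) * (1 / 3) ^ n with ha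
  set c : ℕ → ℝ := fun n => ∑ p ∈ Finset.HasAntidiagonal.antidiagonal n, a p.1 * a p.2 with hc
  have ha0 : a 0 = 0 := by simp [ha, hm0]
  have ha1 : a 1 = 1 / 3 := by simp [ha, hm1]
  have hanneg : ∀ n, 0 ≤ a n := fun n => by positivity
  have hcnneg : ∀ n, 0 ≤ c n := fun n =>
    Finset.sum_nonneg fun p _ => mul_nonneg (hanneg _) (hanneg _)
  have hc0 : c 0 = 0 := by simp [hc, ha0]
  -- the key recurrence in terms of `a` and `c`
  have hrec : ∀ n : ℕ, a (n + 2) = 1 / 3 * (a (n + 1) + c (n + 1)) := by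
    intro n
    have hmrec := hm (n + 2) (by omega)
    simp only [show n + 2 - 1 = n + 1 from rfl, show n + 2 - 2 = n from rfl] at hmrec
    have hcval : c (n + 1) = ∑ j ∈ Finset.range n, a (j + 1) * a (n - j) := by
      show (∑ p ∈ Finset.HasAntidiagonal.antidiagonal (n + 1), a p.1 * a p.2) = _
      rw [Finset.Nat.sum_antidiagonal_eq_sum_range_succ_mk]
      rw [Finset.sum_range_succ', Finset.sum_range_succ]
      simp [ha0]
    have hIcc : (∑ i ∈ Finset.Icc 1 n, ((m i : ℝ) * m (n + 1 - i)))
        = ∑ j ∈ Finset.range n, (m (j + 1) : ℝ) * m (n - j) := by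
      rw [show Finset.Icc 1 n = Finset.Ico 1 (n + 1) by rfl, Finset.sum_Ico_eq_sum_range]
      refine Finset.sum_congr (by simp) fun j hj => ?_
      rw [show n + 1 - (1 + j) = n - j by omega, add_comm 1 j]
    have hcval2 : c (n + 1) = (1 / 3 : ℝ) ^ (n + 1) *
        ∑ j ∈ Finset.range n, (m (j + 1) : ℝ) * m (n - j) := by
      rw [hcval, Finset.mul_sum]
      refine Finset.sum_congr rfl fun j hj => ?_
      simp only [Finset.mem_range] at hj
      have hpow : ((1:ℝ)/3) ^ (j + 1) * ((1:ℝ)/3) ^ (n - j) = ((1:ℝ)/3) ^ (n + 1) := by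
        rw [← pow_add]
        congr 1
        omega
      simp only [ha]
      calc (m (j+1) : ℝ) * (1/3)^(j+1) * ((m (n-j) : ℝ) * (1/3)^(n-j))
          = ((1:ℝ)/3)^(j+1) * ((1:ℝ)/3)^(n-j) * ((m (j+1) : ℝ) * m (n-j)) := by ring
        _ = (1/3)^(n+1) * ((m (j+1) : ℝ) * m (n-j)) := by rw [hpow]
    rw [hcval2]
    show (m (n + 2) : ℝ) * (1 / 3) ^ (n + 2) = _
    rw [hmrec]
    push_cast
    rw [hIcc]
    show _ = 1 / 3 * ((m (n + 1) : ℝ) * (1 / 3) ^ (n + 1) + _)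
    ring
  -- partial sums are bounded by 1
  have htriangle : ∀ M : ℕ, ∑ k ∈ Finset.range M, c k ≤ (∑ n ∈ Finset.range M, a n) ^ 2 := by
    intro M
    have hdisj : (↑(Finset.range M) : Set ℕ).PairwiseDisjoint Finset.HasAntidiagonal.antidiagonal := by
      intro i _ j _ hij
      simp only [Finset.disjoint_left]
      intro p hp hp'
      simp only [Finset.HasAntidiagonal.mem_antidiagonal] at hp hp'
      omega
    have h1 : ∑ k ∈ Finset.range M, c k
        = ∑ p ∈ (Finset.range M).biUnion Finset.HasAntidiagonal.antidiagonal, a p.1 * a p.2 := by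
      rw [Finset.sum_biUnion hdisj]
    have hsub : (Finset.range M).biUnion Finset.HasAntidiagonal.antidiagonal ⊆
        Finset.range M ×ˢ Finset.range M := by
      intro p hp
      simp only [Finset.mem_biUnion, Finset.mem_range, Finset.HasAntidiagonal.mem_antidiagonal] at hp
      obtain ⟨k, hk, hpk⟩ := hp
      simp only [Finset.mem_product, Finset.mem_range]
      omega
    rw [h1, sq, Finset.sum_mul_sum, ← Finset.sum_product']
    exact Finset.sum_le_sum_of_subset_of_nonneg hsub
      fun p _ _ => mul_nonneg (hanneg _) (hanneg _)
  have hbound : ∀ N : ℕ, ∑ n ∈ Finset.range N, a n ≤ 1 := by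
    intro N
    induction N using Nat.strong_induction_on with
    | _ N ih =>
      match N with
      | 0 => simp
      | 1 => simp [ha0]
      | (N + 2) =>
        have hS1 : ∑ n ∈ Finset.range (N + 1), a n ≤ 1 := ih (N + 1) (by omega)
        have hsplit : ∑ n ∈ Finset.range (N + 2), a n
            = a 0 + a 1 + ∑ k ∈ Finset.range N, a (k + 2) := by
          rw [Finset.sum_range_succ' a (N + 1), Finset.sum_range_succ' (fun k => a (k + 1)) N]
          ring
        have hA : ∑ k ∈ Finset.range N, a (k + 1) ≤ 1 := by
          have : ∑ k ∈ Finset.range N, a (k + 1) ≤ ∑ n ∈ Finset.range (N + 1), a n := by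
            rw [Finset.sum_range_succ' a N]
            have := hanneg 0
            linarith
          linarith
        have hC : ∑ k ∈ Finset.range N, c (k + 1) ≤ 1 := by
          have h1 : ∑ k ∈ Finset.range N, c (k + 1) ≤ ∑ k ∈ Finset.range (N + 1), c k := by
            rw [Finset.sum_range_succ' c N]
            have := hcnneg 0
            linarith
          have h2 := htriangle (N + 1)
          nlinarith [Finset.sum_nonneg (fun (i : ℕ) (_ : i ∈ Finset.range (N+1)) => hanneg i)]
        have : ∑ k ∈ Finset.range N, a (k + 2)
            = 1 / 3 * (∑ k ∈ Finset.range N, a (k + 1) + ∑ k ∈ Finset.range N, c (k + 1)) := by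
          rw [← Finset.sum_add_distrib, Finset.mul_sum]
          exact Finset.sum_congr rfl fun k _ => hrec k
        rw [hsplit, this, ha0, ha1]
        linarith
  -- summability
  have hsumm : Summable a := summable_of_sum_range_le hanneg hbound
  have hnorm : Summable fun n => ‖a n‖ := by
    simpa [Real.norm_of_nonneg (hanneg _)] using hsumm
  have hcsumm : Summable c := by
    have := summable_norm_sum_mul_antidiagonal_of_summable_norm hnorm hnorm
    refine this.of_norm_bounded ?_
    intro n
    simp only [hc, norm_norm, le_refl]
  set s : ℝ := ∑' n, a n with hs
  have hCs : ∑' n, c n = s * s := by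
    rw [hc, ← tsum_mul_tsum_eq_tsum_sum_antidiagonal_of_summable_norm hnorm hnorm]
  -- derive the quadratic equation for s
  have hshift1 : Summable fun n => a (n + 1) := (summable_nat_add_iff 1).mpr hsumm
  have hshift2 : Summable fun n => a (n + 2) := (summable_nat_add_iff 2).mpr hsumm
  have hcshift : Summable fun n => c (n + 1) := (summable_nat_add_iff 1).mpr hcsumm
  have e1 : s = a 0 + ∑' n, a (n + 1) := hsumm.tsum_eq_zero_add
  have e2 : (∑' n, a (n + 1)) = a 1 + ∑' n, a (n + 2) := by
    have := hshift1.tsum_eq_zero_add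
    simpa using this
  have e3 : (∑' n, c n) = c 0 + ∑' n, c (n + 1) := hcsumm.tsum_eq_zero_add
  have e4 : (∑' n, a (n + 2)) = 1 / 3 * (∑' n, a (n + 1) + ∑' n, c (n + 1)) := by
    calc (∑' n, a (n + 2)) = ∑' n, (1 / 3 * (a (n + 1) + c (n + 1))) := by
          exact tsum_congr hrec
      _ = 1 / 3 * ∑' n, (a (n + 1) + c (n + 1)) := by rw [tsum_mul_left]
      _ = 1 / 3 * (∑' n, a (n + 1) + ∑' n, c (n + 1)) := by rw [hshift1.tsum_add hcshift]
  have hA1 : ∑' n, a (n + 1) = s := by rw [e1, ha0]; ring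
  have hC1 : ∑' n, c (n + 1) = s * s := by rw [← hCs, e3, hc0]; ring
  have hquad : s = 1 / 3 + 1 / 3 * (s + s * s) := by
    calc s = ∑' n, a (n + 1) := hA1.symm
      _ = a 1 + ∑' n, a (n + 2) := e2
      _ = 1 / 3 + 1 / 3 * (s + s * s) := by rw [ha1, e4, hA1, hC1]
  have hs1 : s = 1 := by nlinarith [sq_nonneg (s - 1)]
  have := hsumm.hasSum
  rwa [← hs, hs1] at this
end
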